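/- arXiv:2304.14166 — 3 statements merged into one kernel-verified Lean document; each statement's English description precedes it below -/
import Mathlib

section
/- Strong converse with shared randomness: Define ψ_t(V‖V̄|P_X) := log Σ_x P_X(x) Σ_y V(y|x)^{1−t} V̄(y|x)^t and φ*_sh(t) := sup_{P_X} min_{V ∈ conv(W), V̄ ∈ conv(W̄)} ψ_t(V‖V̄|P_X). Assume the minimax-limit exchange lim_{t→0^−} φ*_sh(t)/(−t) = sup_{P_X} min_{V ∈ conv(W), V̄ ∈ conv(W̄)} lim_{t→0^−} ψ_t(V‖V̄|P_X)/(−t), so that this limit equals D*_sh := sup_{P_X} min_{V,V̄} D(V‖V̄|P_X). Then for any sequence of blocklength-n shared-randomness schemes whose type-2 errors satisfy liminf_{n→∞} −(1/n) log β_n > D*_sh, the type-1 errors satisfy liminf_{n→∞} −(1/n) log(1−α_n) > 0; i.e., the probability of correct decision under H0 decays exponentially. -/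
open Finset

/-- `p` is a probability mass function. -/
def IsDist {Z : Type*} [Fintype Z] (p : Z → ℝ) : Prop :=
  (∀ z, 0 ≤ p z) ∧ ∑ z, p z = 1

/-- The prefix of length `i` of the word `z`. -/
def pre {Z : Type*} {n : ℕ} (z : Fin n → Z) (i : Fin n) : Fin i.val → Z :=
  fun j => z (Fin.castLE i.isLt.le j)

/-- Conditional KL divergence `D(V‖V̄|P_X)` between channels from `X` to `Y`. -/
noncomputable def condKL {X Y : Type*} [Fintype X] [Fintype Y]
    (V Vb : X → Y → ℝ) (pX : X → ℝ) : ℝ :=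
  ∑ x, pX x * ∑ y, V x y * Real.log (V x y / Vb x y)

/-- `ψ_t(V‖V̄|P_X) = log Σ_x P_X(x) Σ_y V(y|x)^{1-t} V̄(y|x)^t`. -/
noncomputable def psiT {X Y : Type*} [Fintype X] [Fintype Y]
    (t : ℝ) (V Vb : X → Y → ℝ) (pX : X → ℝ) : ℝ :=
  Real.log (∑ x, pX x * ∑ y, (V x y) ^ (1 - t) * (Vb x y) ^ t)

/-- The channel obtained by mixing the state of `W` according to `pS`. -/
noncomputable def mix {X Y S : Type*} [Fintype S] (W : X → S → Y → ℝ) (pS : S → ℝ) :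
    X → Y → ℝ :=
  fun x y => ∑ s, pS s * W x s y

/-- `D*_sh = sup_{P_X} min_{V ∈ conv(W), V̄ ∈ conv(W̄)} D(V‖V̄|P_X)`. -/
noncomputable def Dsh {X Y S Sb : Type*} [Fintype X] [Fintype Y] [Fintype S] [Fintype Sb]
    (W : X → S → Y → ℝ) (Wb : X → Sb → Y → ℝ) : ℝ :=
  ⨆ pX : {p : X → ℝ // IsDist p},
    sInf {d | ∃ pS : S → ℝ, IsDist pS ∧ ∃ pSb : Sb → ℝ, IsDist pSb ∧
      d = condKL (mix W pS) (mix Wb pSb) pX.1}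

/-- `φ*_sh(t) = sup_{P_X} min_{V ∈ conv(W), V̄ ∈ conv(W̄)} ψ_t(V‖V̄|P_X)`. -/
noncomputable def phiStarSh {X Y S Sb : Type*} [Fintype X] [Fintype Y] [Fintype S]
    [Fintype Sb] (W : X → S → Y → ℝ) (Wb : X → Sb → Y → ℝ) (t : ℝ) : ℝ :=
  ⨆ pX : {p : X → ℝ // IsDist p},
    sInf {v | ∃ pS : S → ℝ, IsDist pS ∧ ∃ pSb : Sb → ℝ, IsDist pSb ∧
      v = psiT t (mix W pS) (mix Wb pSb) pX.1}

/-- A blocklength-`n` scheme with shared randomness `U`: the (possibly adaptive)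
transmitter maps `U` and past outputs to the next input, and the detector decides the
hypothesis from `(U, X^n, Y^n)` (`true` means deciding `H1`). -/
structure SRScheme (X Y : Type) (n : ℕ) where
  U : Type
  [fintU : Fintype U]
  pU : U → ℝ
  pU_nonneg : ∀ u, 0 ≤ pU u
  pU_sum : ∑ u, pU u = 1
  enc : U → (i : Fin n) → (Fin i.val → Y) → X
  dec : U → (Fin n → X) → (Fin n → Y) → Bool

attribute [instance] SRScheme.fintU

/-- An adaptive (randomized) adversary strategy: a distribution on states given the time
index and past outputs. -/
def AdvStrat (Y S : Type) (n : ℕ) := (i : Fin n) → (Fin i.val → Y) → S → ℝ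

def ValidAdv {Y S : Type} [Fintype S] {n : ℕ} (a : AdvStrat Y S n) : Prop :=
  ∀ i h, IsDist (a i h)

/-- The inputs induced by shared randomness `u` and output sequence `y`. -/
def inducedInputs {X Y : Type} {n : ℕ} (sc : SRScheme X Y n) (u : sc.U)
    (y : Fin n → Y) : Fin n → X :=
  fun i => sc.enc u i (pre y i)

/-- Joint probability of `(u, y^n)` when the transmitter uses scheme `sc`, the channel
family is `W`, and the adversary plays the adaptive strategy `a`. -/
noncomputable def jointProb {X Y S : Type} [Fintype S] {n : ℕ}
    (sc : SRScheme X Y n) (W : X → S → Y → ℝ) (a : AdvStrat Y S n)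
    (u : sc.U) (y : Fin n → Y) : ℝ :=
  sc.pU u * ∏ i : Fin n, ∑ s, a i (pre y i) s * W (sc.enc u i (pre y i)) s (y i)

/-- Worst-case (over adaptive adversaries) probability that the detector declares `H1`
under hypothesis `H0` (type-1 error). -/
noncomputable def alphaSh {X Y S : Type} [Fintype Y] [Fintype S] {n : ℕ}
    (sc : SRScheme X Y n) (W : X → S → Y → ℝ) : ℝ :=
  ⨆ a : {a : AdvStrat Y S n // ValidAdv a},
    ∑ u, ∑ y : Fin n → Y,
      jointProb sc W a.1 u y * (if sc.dec u (inducedInputs sc u y) y = true then 1 else 0)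

/-- Worst-case (over adaptive adversaries) probability that the detector declares `H0`
under hypothesis `H1` (type-2 error). -/
noncomputable def betaSh {X Y Sb : Type} [Fintype Y] [Fintype Sb] {n : ℕ}
    (sc : SRScheme X Y n) (Wb : X → Sb → Y → ℝ) : ℝ :=
  ⨆ a : {a : AdvStrat Y Sb n // ValidAdv a},
    ∑ u, ∑ y : Fin n → Y,
      jointProb sc Wb a.1 u y * (if sc.dec u (inducedInputs sc u y) y = false then 1 else 0)

set_option linter.unusedSectionVars false
namespace SCAux

variable {X Y S Sb : Type} [Fintype X] [Fintype Y] [Fintype S] [Fintype Sb]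

lemma isDist_unif [Nonempty S] : IsDist (fun _ : S => (Fintype.card S : ℝ)⁻¹) := by
  constructor
  · intro z; positivity
  · rw [Finset.sum_const, card_univ, nsmul_eq_mul]
    rw [mul_inv_cancel₀]
    exact Nat.cast_ne_zero.2 Fintype.card_ne_zero

lemma mix_nonneg {W : X → S → Y → ℝ} (hW : ∀ x s y, 0 ≤ W x s y) {pS : S → ℝ}
    (hpS : IsDist pS) (x : X) (y : Y) : 0 ≤ mix W pS x y :=
  Finset.sum_nonneg fun s _ => mul_nonneg (hpS.1 s) (hW x s y)

lemma mix_isDist {W : X → S → Y → ℝ} (hW : ∀ x s, IsDist (W x s)) {pS : S → ℝ}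
    (hpS : IsDist pS) (x : X) : IsDist (mix W pS x) := by
  constructor
  · exact fun y => mix_nonneg (fun x s y => (hW x s).1 y) hpS x y
  · show ∑ y, ∑ s, pS s * W x s y = 1
    rw [Finset.sum_comm]
    calc ∑ s, ∑ y, pS s * W x s y = ∑ s, pS s * ∑ y, W x s y := by
          simp [Finset.mul_sum]
      _ = ∑ s, pS s := by
          refine Finset.sum_congr rfl fun s _ => ?_
          rw [(hW x s).2, mul_one]
      _ = 1 := hpS.2

lemma mix_pos {W : X → S → Y → ℝ} (hWpos : ∀ x s y, 0 < W x s y) {pS : S → ℝ}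
    (hpS : IsDist pS) (x : X) (y : Y) : 0 < mix W pS x y := by
  obtain ⟨s0, hs0⟩ : ∃ s0, 0 < pS s0 := by
    by_contra h
    push_neg at h
    have : ∑ s, pS s = 0 := le_antisymm (Finset.sum_nonpos fun s _ => h s)
      (Finset.sum_nonneg fun s _ => hpS.1 s)
    rw [hpS.2] at this; norm_num at this
  refine Finset.sum_pos' (fun s _ => mul_nonneg (hpS.1 s) (hWpos x s y).le) ?_
  exact ⟨s0, Finset.mem_univ s0, mul_pos hs0 (hWpos x s0 y)⟩

lemma mix_le_one {W : X → S → Y → ℝ} (hW : ∀ x s, IsDist (W x s)) {pS : S → ℝ}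
    (hpS : IsDist pS) (x : X) (y : Y) : mix W pS x y ≤ 1 := by
  have h := mix_isDist hW hpS x
  calc mix W pS x y ≤ ∑ y', mix W pS x y' :=
        Finset.single_le_sum (fun y' _ => h.1 y') (Finset.mem_univ y)
    _ = 1 := h.2

lemma gibbs {p q : Y → ℝ} (hp : IsDist p) (hq : IsDist q)
    (hppos : ∀ y, 0 < p y) (hqpos : ∀ y, 0 < q y) :
    0 ≤ ∑ y, p y * Real.log (p y / q y) := by
  have key : ∑ y, p y * Real.log (q y / p y) ≤ 0 := by
    calc ∑ y, p y * Real.log (q y / p y)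
        ≤ ∑ y, p y * (q y / p y - 1) := by
          refine Finset.sum_le_sum fun y _ => ?_
          exact mul_le_mul_of_nonneg_left
            (Real.log_le_sub_one_of_pos (div_pos (hqpos y) (hppos y))) (hp.1 y)
      _ = ∑ y, (q y - p y) := by
          refine Finset.sum_congr rfl fun y _ => ?_
          rw [mul_sub, mul_one, mul_comm (p y), div_mul_cancel₀ _ (ne_of_gt (hppos y))]
      _ = 0 := by rw [Finset.sum_sub_distrib, hp.2, hq.2]; ring
  have : ∑ y, p y * Real.log (p y / q y) = -∑ y, p y * Real.log (q y / p y) := by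
    rw [← Finset.sum_neg_distrib]
    refine Finset.sum_congr rfl fun y _ => ?_
    rw [show p y / q y = (q y / p y)⁻¹ by rw [inv_div], Real.log_inv]
    ring
  rw [this]
  linarith

end SCAux

namespace SCAux

variable {X Y S Sb : Type} [Fintype X] [Fintype Y] [Fintype S] [Fintype Sb]

lemma Dsh_nonneg (W : X → S → Y → ℝ) (Wb : X → Sb → Y → ℝ)
    (hW : ∀ x s, IsDist (W x s)) (hWb : ∀ x s, IsDist (Wb x s))
    (hWpos : ∀ x s y, 0 < W x s y) (hWbpos : ∀ x s y, 0 < Wb x s y) :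
    0 ≤ Dsh W Wb := by
  refine Real.iSup_nonneg fun pX => ?_
  refine Real.sInf_nonneg fun d hd => ?_
  obtain ⟨pS, hpS, pSb, hpSb, rfl⟩ := hd
  refine Finset.sum_nonneg fun x _ => mul_nonneg (pX.2.1 x) ?_
  exact gibbs (mix_isDist hW hpS x) (mix_isDist hWb hpSb x)
    (mix_pos hWpos hpS x) (mix_pos hWbpos hpSb x)

lemma sum_snoc {n : ℕ} (g : (Fin (n+1) → Y) → ℝ) :
    ∑ y : Fin (n+1) → Y, g y = ∑ h : Fin n → Y, ∑ l : Y, g (Fin.snoc h l) := by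
  calc ∑ y : Fin (n+1) → Y, g y
      = ∑ p : (Fin n → Y) × Y, g (Fin.snoc p.1 p.2) :=
        Fintype.sum_equiv
          ⟨fun y => (Fin.init y, y (Fin.last n)), fun p => Fin.snoc p.1 p.2,
            fun y => Fin.snoc_init_self y, fun p => by simp [Fin.init_snoc, Fin.snoc_last]⟩
          g (fun p => g (Fin.snoc p.1 p.2)) (fun y => by simp [Fin.snoc_init_self])
    _ = ∑ h : Fin n → Y, ∑ l : Y, g (Fin.snoc h l) := by exact Fintype.sum_prod_type _

lemma pre_castSucc {n : ℕ} (y : Fin (n+1) → Y) (j : Fin n) :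
    pre y j.castSucc = pre (Fin.init y) j := by
  funext k
  exact congrArg y (Fin.ext rfl)

lemma pre_last {n : ℕ} (y : Fin (n+1) → Y) :
    pre y (Fin.last n) = Fin.init y := by
  funext k
  exact congrArg y (Fin.ext rfl)

lemma prod_snoc {n : ℕ} (F : (i : Fin (n+1)) → (Fin i.val → Y) → Y → ℝ)
    (h : Fin n → Y) (l : Y) :
    ∏ i : Fin (n+1), F i (pre (Fin.snoc h l) i) ((Fin.snoc h l : Fin (n+1) → Y) i)
      = (∏ i : Fin n, F i.castSucc (pre h i) (h i)) * F (Fin.last n) h l := by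
  rw [Fin.prod_univ_castSucc]
  congr 1
  · refine Finset.prod_congr rfl fun i _ => ?_
    have h1 : pre (Fin.snoc h l : Fin (n+1) → Y) i.castSucc = pre h i := by
      rw [pre_castSucc, Fin.init_snoc]
    rw [h1, Fin.snoc_castSucc]
  · have h2 : pre (Fin.snoc h l : Fin (n+1) → Y) (Fin.last n) = h := by
      rw [pre_last, Fin.init_snoc]
    rw [h2, Fin.snoc_last]

lemma sum_prod_one : ∀ (n : ℕ) (F : (i : Fin n) → (Fin i.val → Y) → Y → ℝ),
    (∀ i h, ∑ l, F i h l = 1) →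
    ∑ y : Fin n → Y, ∏ i, F i (pre y i) (y i) = 1
  | 0, F, _ => by simp
  | (n+1), F, hF => by
    rw [sum_snoc]
    have : ∀ (h : Fin n → Y), ∑ l : Y,
        ∏ i : Fin (n+1), F i (pre (Fin.snoc h l) i) ((Fin.snoc h l : Fin (n+1) → Y) i)
          = ∏ i : Fin n, F i.castSucc (pre h i) (h i) := by
      intro h
      calc ∑ l : Y, ∏ i : Fin (n+1), F i (pre (Fin.snoc h l) i) ((Fin.snoc h l : Fin (n+1) → Y) i)
          = ∑ l : Y, (∏ i : Fin n, F i.castSucc (pre h i) (h i)) * F (Fin.last n) h l := by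
            exact Finset.sum_congr rfl fun l _ => prod_snoc F h l
        _ = (∏ i : Fin n, F i.castSucc (pre h i) (h i)) * ∑ l, F (Fin.last n) h l := by
            rw [Finset.mul_sum]
        _ = _ := by rw [hF (Fin.last n) h, mul_one]
    rw [Finset.sum_congr rfl fun h _ => this h]
    exact sum_prod_one n (fun i h l => F i.castSucc h l) (fun i h => hF i.castSucc h)

end SCAux

namespace SCAux

variable {X Y S Sb : Type} [Fintype X] [Fintype Y] [Fintype S] [Fintype Sb]

lemma validAdv_unif [Nonempty S] {n : ℕ} :
    ValidAdv (fun (_ : Fin n) (_ : _ → Y) (_ : S) => (Fintype.card S : ℝ)⁻¹) :=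
  fun _ _ => isDist_unif

instance advNonempty [Nonempty S] {n : ℕ} : Nonempty {a : AdvStrat Y S n // ValidAdv a} :=
  ⟨⟨_, validAdv_unif⟩⟩

lemma jointProb_nonneg {n : ℕ} (sc : SRScheme X Y n) (W : X → S → Y → ℝ)
    (hW : ∀ x s y, 0 ≤ W x s y) {a : AdvStrat Y S n} (ha : ValidAdv a)
    (u : sc.U) (y : Fin n → Y) : 0 ≤ jointProb sc W a u y := by
  refine mul_nonneg (sc.pU_nonneg u) (Finset.prod_nonneg fun i _ => ?_)
  exact Finset.sum_nonneg fun s _ => mul_nonneg ((ha i (pre y i)).1 s) (hW _ s _)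

lemma jointProb_pos {n : ℕ} (sc : SRScheme X Y n) (W : X → S → Y → ℝ)
    (hW : ∀ x s y, 0 < W x s y) {a : AdvStrat Y S n} (ha : ValidAdv a)
    (u : sc.U) (hu : 0 < sc.pU u) (y : Fin n → Y) : 0 < jointProb sc W a u y := by
  refine mul_pos hu (Finset.prod_pos fun i _ => ?_)
  exact mix_pos hW (ha i (pre y i)) _ _

lemma jointProb_sum {n : ℕ} (sc : SRScheme X Y n) (W : X → S → Y → ℝ)
    (hW : ∀ x s, IsDist (W x s)) {a : AdvStrat Y S n} (ha : ValidAdv a) :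
    ∑ u, ∑ y : Fin n → Y, jointProb sc W a u y = 1 := by
  have key : ∀ u, ∑ y : Fin n → Y,
      ∏ i, ∑ s, a i (pre y i) s * W (sc.enc u i (pre y i)) s (y i) = 1 := by
    intro u
    exact sum_prod_one n (fun i h l => ∑ s, a i h s * W (sc.enc u i h) s l)
      (by
        intro i h
        rw [Finset.sum_comm]
        calc ∑ s, ∑ l, a i h s * W (sc.enc u i h) s l
            = ∑ s, a i h s * ∑ l, W (sc.enc u i h) s l := by simp [Finset.mul_sum]
          _ = ∑ s, a i h s := by
              refine Finset.sum_congr rfl fun s _ => ?_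
              rw [(hW _ s).2, mul_one]
          _ = 1 := (ha i h).2)
  calc ∑ u, ∑ y : Fin n → Y, jointProb sc W a u y
      = ∑ u, sc.pU u * ∑ y : Fin n → Y,
          ∏ i, ∑ s, a i (pre y i) s * W (sc.enc u i (pre y i)) s (y i) := by
        refine Finset.sum_congr rfl fun u _ => ?_
        rw [Finset.mul_sum]
        rfl
    _ = ∑ u, sc.pU u := by
        refine Finset.sum_congr rfl fun u _ => ?_
        rw [key u, mul_one]
    _ = 1 := sc.pU_sum

/-- probability of deciding `H1` plus probability of deciding `H0` equals one. -/
lemma jointProb_split {n : ℕ} (sc : SRScheme X Y n) (W : X → S → Y → ℝ)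
    (hW : ∀ x s, IsDist (W x s)) {a : AdvStrat Y S n} (ha : ValidAdv a) :
    (∑ u, ∑ y : Fin n → Y, jointProb sc W a u y *
        (if sc.dec u (inducedInputs sc u y) y = true then 1 else 0))
      = 1 - ∑ u, ∑ y : Fin n → Y, jointProb sc W a u y *
        (if sc.dec u (inducedInputs sc u y) y = false then 1 else 0) := by
  rw [eq_sub_iff_add_eq]
  have key : (∑ u, ∑ y : Fin n → Y, jointProb sc W a u y *
        (if sc.dec u (inducedInputs sc u y) y = true then 1 else 0))
      + (∑ u, ∑ y : Fin n → Y, jointProb sc W a u y *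
        (if sc.dec u (inducedInputs sc u y) y = false then 1 else 0))
      = ∑ u, ∑ y : Fin n → Y, jointProb sc W a u y := by
    rw [← Finset.sum_add_distrib]
    refine Finset.sum_congr rfl fun u _ => ?_
    rw [← Finset.sum_add_distrib]
    refine Finset.sum_congr rfl fun y _ => ?_
    rw [← mul_add]
    rcases Bool.eq_false_or_eq_true (sc.dec u (inducedInputs sc u y) y) with h | h <;>
      simp [h]
  rw [key, jointProb_sum sc W hW ha]

lemma betaSh_le_value {n : ℕ} (sc : SRScheme X Y n) (Wb : X → Sb → Y → ℝ)
    (hWb : ∀ x s, IsDist (Wb x s)) {a : AdvStrat Y Sb n} (ha : ValidAdv a) :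
    (∑ u, ∑ y : Fin n → Y, jointProb sc Wb a u y *
        (if sc.dec u (inducedInputs sc u y) y = false then 1 else 0)) ≤ betaSh sc Wb := by
  refine le_ciSup_of_le ?_ (⟨a, ha⟩ : {a : AdvStrat Y Sb n // ValidAdv a}) le_rfl
  rw [bddAbove_def]
  refine ⟨1, ?_⟩
  rintro v ⟨⟨b, hb⟩, rfl⟩
  calc ∑ u, ∑ y : Fin n → Y, jointProb sc Wb b u y *
        (if sc.dec u (inducedInputs sc u y) y = false then 1 else 0)
      ≤ ∑ u, ∑ y : Fin n → Y, jointProb sc Wb b u y := by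
        refine Finset.sum_le_sum fun u _ => Finset.sum_le_sum fun y _ => ?_
        have h0 := jointProb_nonneg sc Wb (fun x s y => (hWb x s).1 y) hb u y
        split <;> simp [h0]
    _ = 1 := jointProb_sum sc Wb hWb hb

lemma betaSh_nonneg [Nonempty Sb] {n : ℕ} (sc : SRScheme X Y n) (Wb : X → Sb → Y → ℝ)
    (hWb : ∀ x s, IsDist (Wb x s)) : 0 ≤ betaSh sc Wb := by
  refine Real.iSup_nonneg fun a => ?_
  refine Finset.sum_nonneg fun u _ => Finset.sum_nonneg fun y _ => ?_
  refine mul_nonneg (jointProb_nonneg sc Wb (fun x s y => (hWb x s).1 y) a.2 u y) ?_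
  split <;> norm_num

lemma betaSh_le_one [Nonempty Sb] {n : ℕ} (sc : SRScheme X Y n) (Wb : X → Sb → Y → ℝ)
    (hWb : ∀ x s, IsDist (Wb x s)) : betaSh sc Wb ≤ 1 := by
  refine ciSup_le fun ⟨b, hb⟩ => ?_
  calc ∑ u, ∑ y : Fin n → Y, jointProb sc Wb b u y *
        (if sc.dec u (inducedInputs sc u y) y = false then 1 else 0)
      ≤ ∑ u, ∑ y : Fin n → Y, jointProb sc Wb b u y := by
        refine Finset.sum_le_sum fun u _ => Finset.sum_le_sum fun y _ => ?_
        have h0 := jointProb_nonneg sc Wb (fun x s y => (hWb x s).1 y) hb u y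
        split <;> simp [h0]
    _ = 1 := jointProb_sum sc Wb hWb hb

lemma alphaSh_ge_value [Nonempty S] {n : ℕ} (sc : SRScheme X Y n) (W : X → S → Y → ℝ)
    (hW : ∀ x s, IsDist (W x s)) {a : AdvStrat Y S n} (ha : ValidAdv a) :
    (∑ u, ∑ y : Fin n → Y, jointProb sc W a u y *
        (if sc.dec u (inducedInputs sc u y) y = true then 1 else 0)) ≤ alphaSh sc W := by
  refine le_ciSup_of_le ?_ (⟨a, ha⟩ : {a : AdvStrat Y S n // ValidAdv a}) le_rfl
  rw [bddAbove_def]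
  refine ⟨1, ?_⟩
  rintro v ⟨⟨b, hb⟩, rfl⟩
  calc ∑ u, ∑ y : Fin n → Y, jointProb sc W b u y *
        (if sc.dec u (inducedInputs sc u y) y = true then 1 else 0)
      ≤ ∑ u, ∑ y : Fin n → Y, jointProb sc W b u y := by
        refine Finset.sum_le_sum fun u _ => Finset.sum_le_sum fun y _ => ?_
        have h0 := jointProb_nonneg sc W (fun x s y => (hW x s).1 y) hb u y
        split <;> simp [h0]
    _ = 1 := jointProb_sum sc W hW hb

end SCAux

namespace SCAux

lemma holder_neg {ι : Type*} [Fintype ι] {t : ℝ} (ht : t < 0) (p q : ι → ℝ)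
    (hp : ∀ i, 0 ≤ p i) (hq : ∀ i, 0 ≤ q i) (hpq : ∀ i, q i = 0 → p i = 0) :
    ∑ i, p i ≤ (∑ i, p i ^ (1-t) * q i ^ t) ^ (1/(1-t)) * (∑ i, q i) ^ (-t/(1-t)) := by
  have h1t : (1:ℝ) < 1 - t := by linarith
  have h1t0 : (1:ℝ) - t ≠ 0 := by linarith
  have hnt : (0:ℝ) < -t := by linarith
  have hnt0 : -t ≠ 0 := ne_of_gt hnt
  have hconj : (1-t).HolderConjugate ((1-t)/(-t)) := by
    rw [Real.holderConjugate_iff_eq_conjExponent h1t]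
    congr 1
    ring
  set a : ι → ℝ := fun i => (p i ^ (1-t) * q i ^ t) ^ (1/(1-t)) with ha
  set b : ι → ℝ := fun i => q i ^ (-t/(1-t)) with hb
  have hmid : ∀ i, (0:ℝ) ≤ p i ^ (1-t) * q i ^ t :=
    fun i => mul_nonneg (Real.rpow_nonneg (hp i) _) (Real.rpow_nonneg (hq i) _)
  have hexp1 : (1-t) * (1/(1-t)) = 1 := mul_one_div_cancel h1t0
  have hab : ∀ i, p i = a i * b i := by
    intro i
    rcases eq_or_lt_of_le (hq i) with hqi | hqi
    · have hpi : p i = 0 := hpq i hqi.symm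
      rw [hpi, ha, hb]
      simp only [← hqi]
      rw [Real.zero_rpow (ne_of_lt ht), mul_zero,
        Real.zero_rpow (one_div_ne_zero h1t0), zero_mul]
    · have e1 : a i = p i * q i ^ (t * (1/(1-t))) := by
        rw [ha]
        simp only
        rw [Real.mul_rpow (Real.rpow_nonneg (hp i) _) (Real.rpow_nonneg (hq i) _),
          ← Real.rpow_mul (hp i), ← Real.rpow_mul (hq i), hexp1, Real.rpow_one]
      rw [e1, hb]
      simp only
      rw [mul_assoc, ← Real.rpow_add hqi]
      have : t * (1/(1-t)) + -t/(1-t) = 0 := by field_simp; ring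
      rw [this, Real.rpow_zero, mul_one]
  have har : ∀ i, a i ^ (1-t) = p i ^ (1-t) * q i ^ t := by
    intro i
    rw [ha]
    simp only
    rw [← Real.rpow_mul (hmid i), one_div_mul_cancel h1t0, Real.rpow_one]
  have hbr : ∀ i, b i ^ ((1-t)/(-t)) = q i := by
    intro i
    rw [hb]
    simp only
    rw [← Real.rpow_mul (hq i)]
    have : -t/(1-t) * ((1-t)/(-t)) = 1 := by
      rw [div_mul_div_comm, div_eq_one_iff_eq (by positivity)]
      ring
    rw [this, Real.rpow_one]
  calc ∑ i, p i = ∑ i, a i * b i := Finset.sum_congr rfl fun i _ => hab i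
    _ ≤ (∑ i, a i ^ (1-t)) ^ (1/(1-t)) * (∑ i, b i ^ ((1-t)/(-t))) ^ (1/((1-t)/(-t))) :=
        Real.inner_le_Lp_mul_Lq_of_nonneg univ hconj
          (fun i _ => Real.rpow_nonneg (hmid i) _)
          (fun i _ => Real.rpow_nonneg (hq i) _)
    _ = (∑ i, p i ^ (1-t) * q i ^ t) ^ (1/(1-t)) * (∑ i, q i) ^ (-t/(1-t)) := by
        rw [Finset.sum_congr rfl fun i _ => har i, Finset.sum_congr rfl fun i _ => hbr i,
          one_div_div]

end SCAux

namespace SCAux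

open scoped Classical

variable {X Y S Sb : Type} [Fintype X] [Fintype Y] [Fintype S] [Fintype Sb]

variable {n : ℕ} (sc : SRScheme X Y n) (W : X → S → Y → ℝ) (Wb : X → Sb → Y → ℝ)
  (t : ℝ) (m : (X → ℝ) → (S → ℝ) × (Sb → ℝ))

/-- The recursively-defined tilted weight of `(u, y^i)`. -/
noncomputable def wt : (i : ℕ) → sc.U → (Fin i → Y) → ℝ
  | 0, u, _ => sc.pU u
  | (i+1), u, y =>
    if hlt : i < n then
      wt i u (Fin.init y) *
        ((mix W (m (fun x' => ∑ u', if sc.enc u' ⟨i, hlt⟩ (Fin.init y) = x'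
              then wt i u' (Fin.init y) else 0)).1
            (sc.enc u ⟨i, hlt⟩ (Fin.init y)) (y (Fin.last i))) ^ (1 - t) *
         (mix Wb (m (fun x' => ∑ u', if sc.enc u' ⟨i, hlt⟩ (Fin.init y) = x'
              then wt i u' (Fin.init y) else 0)).2
            (sc.enc u ⟨i, hlt⟩ (Fin.init y)) (y (Fin.last i))) ^ t)
    else 0

/-- The raw (unnormalized) tilted input weights at step `i` given history `h`. -/
noncomputable def raw (i : Fin n) (h : Fin i.val → Y) : X → ℝ :=
  fun x' => ∑ u', if sc.enc u' i h = x' then wt sc W Wb t m i.val u' h else 0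

noncomputable def advA : AdvStrat Y S n := fun i h => (m (raw sc W Wb t m i h)).1

noncomputable def advB : AdvStrat Y Sb n := fun i h => (m (raw sc W Wb t m i h)).2

lemma wt_succ (i : ℕ) (hlt : i < n) (u : sc.U) (y : Fin (i+1) → Y) :
    wt sc W Wb t m (i+1) u y = wt sc W Wb t m i u (Fin.init y) *
      ((mix W (advA sc W Wb t m ⟨i, hlt⟩ (Fin.init y))
          (sc.enc u ⟨i, hlt⟩ (Fin.init y)) (y (Fin.last i))) ^ (1 - t) *
       (mix Wb (advB sc W Wb t m ⟨i, hlt⟩ (Fin.init y))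
          (sc.enc u ⟨i, hlt⟩ (Fin.init y)) (y (Fin.last i))) ^ t) := by
  rw [wt, dif_pos hlt]
  rfl

lemma wt_nonneg (hW : ∀ x s y, 0 ≤ W x s y) (hWb : ∀ x s y, 0 ≤ Wb x s y)
    (hm2 : ∀ p, IsDist (m p).1 ∧ IsDist (m p).2) :
    ∀ (i : ℕ) (u : sc.U) (h : Fin i → Y), 0 ≤ wt sc W Wb t m i u h
  | 0, u, _ => sc.pU_nonneg u
  | (i+1), u, y => by
    rw [wt]
    split
    · refine mul_nonneg (wt_nonneg hW hWb hm2 i u (Fin.init y)) (mul_nonneg ?_ ?_)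
      · exact Real.rpow_nonneg (mix_nonneg hW (hm2 _).1 _ _) _
      · exact Real.rpow_nonneg (mix_nonneg hWb (hm2 _).2 _ _) _
    · exact le_refl 0

lemma wt_eq : ∀ (i : ℕ) (hi : i ≤ n) (u : sc.U) (h : Fin i → Y),
    wt sc W Wb t m i u h = sc.pU u * ∏ j : Fin i,
      ((mix W (advA sc W Wb t m (Fin.castLE hi j) (pre h j))
          (sc.enc u (Fin.castLE hi j) (pre h j)) (h j)) ^ (1 - t) *
       (mix Wb (advB sc W Wb t m (Fin.castLE hi j) (pre h j))
          (sc.enc u (Fin.castLE hi j) (pre h j)) (h j)) ^ t)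
  | 0, _, u, h => by
    rw [wt]
    simp
  | (i+1), hi, u, h => by
    have hlt : i < n := hi
    have hi' : i ≤ n := Nat.le_of_succ_le hi
    rw [wt_succ sc W Wb t m i hlt u h,
      wt_eq i hi' u (Fin.init h), Fin.prod_univ_castSucc]
    have hterm : ∀ j : Fin i,
        ((mix W (advA sc W Wb t m (Fin.castLE hi j.castSucc) (pre h j.castSucc))
            (sc.enc u (Fin.castLE hi j.castSucc) (pre h j.castSucc)) (h j.castSucc)) ^ (1 - t) *
         (mix Wb (advB sc W Wb t m (Fin.castLE hi j.castSucc) (pre h j.castSucc))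
            (sc.enc u (Fin.castLE hi j.castSucc) (pre h j.castSucc)) (h j.castSucc)) ^ t)
          = ((mix W (advA sc W Wb t m (Fin.castLE hi' j) (pre (Fin.init h) j))
            (sc.enc u (Fin.castLE hi' j) (pre (Fin.init h) j)) (Fin.init h j)) ^ (1 - t) *
         (mix Wb (advB sc W Wb t m (Fin.castLE hi' j) (pre (Fin.init h) j))
            (sc.enc u (Fin.castLE hi' j) (pre (Fin.init h) j)) (Fin.init h j)) ^ t) := by
      intro j
      rw [pre_castSucc]
      rfl
    rw [Finset.prod_congr rfl fun j _ => hterm j]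
    have hlast :
        ((mix W (advA sc W Wb t m (Fin.castLE hi (Fin.last i)) (pre h (Fin.last i)))
            (sc.enc u (Fin.castLE hi (Fin.last i)) (pre h (Fin.last i))) (h (Fin.last i))) ^ (1 - t) *
         (mix Wb (advB sc W Wb t m (Fin.castLE hi (Fin.last i)) (pre h (Fin.last i)))
            (sc.enc u (Fin.castLE hi (Fin.last i)) (pre h (Fin.last i))) (h (Fin.last i))) ^ t)
          = ((mix W (advA sc W Wb t m ⟨i, hlt⟩ (Fin.init h))
            (sc.enc u ⟨i, hlt⟩ (Fin.init h)) (h (Fin.last i))) ^ (1 - t) *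
         (mix Wb (advB sc W Wb t m ⟨i, hlt⟩ (Fin.init h))
            (sc.enc u ⟨i, hlt⟩ (Fin.init h)) (h (Fin.last i))) ^ t) := by
      rw [pre_last]
      rfl
    rw [hlast]
    ring

end SCAux

namespace SCAux

open scoped Classical

variable {X Y S Sb : Type} [Fintype X] [Fintype Y] [Fintype S] [Fintype Sb]

variable {n : ℕ} (sc : SRScheme X Y n) (W : X → S → Y → ℝ) (Wb : X → Sb → Y → ℝ)
  (t : ℝ) (m : (X → ℝ) → (S → ℝ) × (Sb → ℝ))

lemma raw_nonneg (hW : ∀ x s y, 0 ≤ W x s y) (hWb : ∀ x s y, 0 ≤ Wb x s y)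
    (hm2 : ∀ p, IsDist (m p).1 ∧ IsDist (m p).2) (i : Fin n) (h : Fin i.val → Y) (x : X) :
    0 ≤ raw sc W Wb t m i h x := by
  refine Finset.sum_nonneg fun u _ => ?_
  split
  · exact wt_nonneg sc W Wb t m hW hWb hm2 i.val u h
  · exact le_refl 0

lemma raw_sum (i : Fin n) (h : Fin i.val → Y) :
    ∑ x, raw sc W Wb t m i h x = ∑ u, wt sc W Wb t m i.val u h := by
  simp only [raw]
  rw [Finset.sum_comm]
  refine Finset.sum_congr rfl fun u _ => ?_
  simp [Finset.sum_ite_eq]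

lemma Z_le (hW : ∀ x s y, 0 ≤ W x s y) (hWb : ∀ x s y, 0 ≤ Wb x s y)
    (hm2 : ∀ p, IsDist (m p).1 ∧ IsDist (m p).2)
    (E : ℝ) (hE : 0 ≤ E)
    (hm1 : ∀ p : X → ℝ, (∀ x, 0 ≤ p x) →
      ∑ x, p x * (∑ l, (mix W (m p).1 x l) ^ (1-t) * (mix Wb (m p).2 x l) ^ t)
        ≤ (∑ x, p x) * E) :
    ∀ i : ℕ, i ≤ n → ∑ u, ∑ h : Fin i → Y, wt sc W Wb t m i u h ≤ E ^ i
  | 0, _ => by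
    simp only [wt]
    simp [sc.pU_sum]
  | (i+1), hi => by
    have hlt : i < n := hi
    have hi' : i ≤ n := Nat.le_of_succ_le hi
    have step : ∀ u, ∑ y : Fin (i+1) → Y, wt sc W Wb t m (i+1) u y
        = ∑ h : Fin i → Y, ∑ l : Y, wt sc W Wb t m i u h *
          ((mix W (advA sc W Wb t m ⟨i, hlt⟩ h) (sc.enc u ⟨i, hlt⟩ h) l) ^ (1 - t) *
           (mix Wb (advB sc W Wb t m ⟨i, hlt⟩ h) (sc.enc u ⟨i, hlt⟩ h) l) ^ t) := by
      intro u
      rw [sum_snoc]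
      refine Finset.sum_congr rfl fun h _ => Finset.sum_congr rfl fun l _ => ?_
      rw [wt_succ sc W Wb t m i hlt u (Fin.snoc h l), Fin.init_snoc]
      congr 2 <;> rw [Fin.snoc_last]
    calc ∑ u, ∑ y : Fin (i+1) → Y, wt sc W Wb t m (i+1) u y
        = ∑ h : Fin i → Y, ∑ u, wt sc W Wb t m i u h *
            ∑ l, ((mix W (advA sc W Wb t m ⟨i, hlt⟩ h) (sc.enc u ⟨i, hlt⟩ h) l) ^ (1 - t) *
             (mix Wb (advB sc W Wb t m ⟨i, hlt⟩ h) (sc.enc u ⟨i, hlt⟩ h) l) ^ t) := by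
          rw [Finset.sum_congr rfl fun u _ => step u, Finset.sum_comm]
          exact Finset.sum_congr rfl fun h _ => Finset.sum_congr rfl fun u _ =>
            (Finset.mul_sum _ _ _).symm
      _ = ∑ h : Fin i → Y, ∑ x, raw sc W Wb t m ⟨i, hlt⟩ h x *
            ∑ l, ((mix W (advA sc W Wb t m ⟨i, hlt⟩ h) x l) ^ (1 - t) *
             (mix Wb (advB sc W Wb t m ⟨i, hlt⟩ h) x l) ^ t) := by
          refine Finset.sum_congr rfl fun h _ => ?_
          conv_rhs => simp only [raw, Finset.sum_mul]
          rw [Finset.sum_comm]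
          refine Finset.sum_congr rfl fun u _ => ?_
          simp [ite_mul, Finset.sum_ite_eq]
      _ ≤ ∑ h : Fin i → Y, (∑ x, raw sc W Wb t m ⟨i, hlt⟩ h x) * E := by
          refine Finset.sum_le_sum fun h _ => ?_
          exact hm1 (raw sc W Wb t m ⟨i, hlt⟩ h)
            (raw_nonneg sc W Wb t m hW hWb hm2 ⟨i, hlt⟩ h)
      _ = (∑ u, ∑ h : Fin i → Y, wt sc W Wb t m i u h) * E := by
          rw [← Finset.sum_mul, Finset.sum_congr rfl fun h (_ : h ∈ univ) =>
            raw_sum sc W Wb t m ⟨i, hlt⟩ h, Finset.sum_comm]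
      _ ≤ E ^ i * E := by
          refine mul_le_mul_of_nonneg_right (Z_le hW hWb hm2 E hE hm1 i hi') hE
      _ = E ^ (i+1) := (pow_succ E i).symm

end SCAux

namespace SCAux

open scoped Classical

variable {X Y S Sb : Type} [Fintype X] [Fintype Y] [Fintype S] [Fintype Sb]

variable {n : ℕ} (sc : SRScheme X Y n) (W : X → S → Y → ℝ) (Wb : X → Sb → Y → ℝ)
  (t : ℝ) (m : (X → ℝ) → (S → ℝ) × (Sb → ℝ))

lemma advA_valid (hm2 : ∀ p, IsDist (m p).1 ∧ IsDist (m p).2) :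
    ValidAdv (advA sc W Wb t m) := fun _ _ => (hm2 _).1

lemma advB_valid (hm2 : ∀ p, IsDist (m p).1 ∧ IsDist (m p).2) :
    ValidAdv (advB sc W Wb t m) := fun _ _ => (hm2 _).2

lemma main_bound (ht : t < 0)
    (hW : ∀ x s, IsDist (W x s)) (hWb : ∀ x s, IsDist (Wb x s))
    (hm2 : ∀ p, IsDist (m p).1 ∧ IsDist (m p).2)
    (E : ℝ) (hE : 0 ≤ E)
    (hm1 : ∀ p : X → ℝ, (∀ x, 0 ≤ p x) →
      ∑ x, p x * (∑ l, (mix W (m p).1 x l) ^ (1-t) * (mix Wb (m p).2 x l) ^ t)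
        ≤ (∑ x, p x) * E) :
    ∑ u, ∑ y : Fin n → Y, (jointProb sc W (advA sc W Wb t m) u y) ^ (1-t) *
        (jointProb sc Wb (advB sc W Wb t m) u y) ^ t ≤ E ^ n := by
  have ht0 : t ≠ 0 := ne_of_lt ht
  have h1t0 : (1:ℝ) - t ≠ 0 := by linarith
  have hW0 : ∀ x s y, 0 ≤ W x s y := fun x s y => (hW x s).1 y
  have hWb0 : ∀ x s y, 0 ≤ Wb x s y := fun x s y => (hWb x s).1 y
  have pointwise : ∀ u (y : Fin n → Y),
      (jointProb sc W (advA sc W Wb t m) u y) ^ (1-t) *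
        (jointProb sc Wb (advB sc W Wb t m) u y) ^ t = wt sc W Wb t m n u y := by
    intro u y
    have hw := wt_eq sc W Wb t m n le_rfl u y
    have hPdef : jointProb sc W (advA sc W Wb t m) u y
        = sc.pU u * ∏ j : Fin n,
          mix W (advA sc W Wb t m j (pre y j)) (sc.enc u j (pre y j)) (y j) := rfl
    have hQdef : jointProb sc Wb (advB sc W Wb t m) u y
        = sc.pU u * ∏ j : Fin n,
          mix Wb (advB sc W Wb t m j (pre y j)) (sc.enc u j (pre y j)) (y j) := rfl
    rcases eq_or_lt_of_le (sc.pU_nonneg u) with hu | hu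
    · rw [hPdef, hQdef, hw, ← hu]
      simp [Real.zero_rpow h1t0, Real.zero_rpow ht0]
    · have hA : ∀ j : Fin n, 0 ≤ mix W (advA sc W Wb t m j (pre y j))
          (sc.enc u j (pre y j)) (y j) := fun j => mix_nonneg hW0 (hm2 _).1 _ _
      have hB : ∀ j : Fin n, 0 ≤ mix Wb (advB sc W Wb t m j (pre y j))
          (sc.enc u j (pre y j)) (y j) := fun j => mix_nonneg hWb0 (hm2 _).2 _ _
      rw [hPdef, hQdef, hw]
      rw [Real.mul_rpow (sc.pU_nonneg u) (Finset.prod_nonneg fun j _ => hA j),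
        Real.mul_rpow (sc.pU_nonneg u) (Finset.prod_nonneg fun j _ => hB j),
        ← Real.finset_prod_rpow univ _ (fun j _ => hA j),
        ← Real.finset_prod_rpow univ _ (fun j _ => hB j)]
      rw [show ∀ (a b c d : ℝ), a * b * (c * d) = (a * c) * (b * d) from fun a b c d => by ring]
      rw [← Real.rpow_add hu, sub_add_cancel, Real.rpow_one, ← Finset.prod_mul_distrib]
      rfl
  rw [Finset.sum_congr rfl fun u _ => Finset.sum_congr rfl fun y _ => pointwise u y]
  exact Z_le sc W Wb t m hW0 hWb0 hm2 E hE hm1 n le_rfl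

end SCAux

namespace SCAux

open scoped Classical

variable {X Y S Sb : Type} [Fintype X] [Fintype Y] [Fintype S] [Fintype Sb]
variable [Nonempty X] [Nonempty Y] [Nonempty S] [Nonempty Sb]

variable (W : X → S → Y → ℝ) (Wb : X → Sb → Y → ℝ)

/-- The per-letter tilted sum `g(x) = ∑_y V(y|x)^{1-t} V̄(y|x)^t`. -/
noncomputable def gfun (t : ℝ) (pS : S → ℝ) (pSb : Sb → ℝ) (x : X) : ℝ :=
  ∑ l, (mix W pS x l) ^ (1-t) * (mix Wb pSb x l) ^ t

lemma gfun_nonneg (t : ℝ) (hW0 : ∀ x s y, 0 ≤ W x s y) (hWb0 : ∀ x s y, 0 ≤ Wb x s y)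
    {pS : S → ℝ} {pSb : Sb → ℝ} (hpS : IsDist pS) (hpSb : IsDist pSb) (x : X) :
    0 ≤ gfun W Wb t pS pSb x :=
  Finset.sum_nonneg fun l _ => mul_nonneg
    (Real.rpow_nonneg (mix_nonneg hW0 hpS x l) _)
    (Real.rpow_nonneg (mix_nonneg hWb0 hpSb x l) _)

lemma normalize_isDist {p : X → ℝ} (h0 : ∀ x, 0 ≤ p x) (hs : 0 < ∑ x, p x) :
    IsDist (fun x => p x / ∑ x', p x') := by
  constructor
  · intro x; exact div_nonneg (h0 x) hs.le
  · rw [← Finset.sum_div, div_self (ne_of_gt hs)]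

lemma exists_pos_elem {p : X → ℝ} (hp : IsDist p) : ∃ x0, 0 < p x0 := by
  by_contra h
  push_neg at h
  have : ∑ x, p x = 0 := le_antisymm (Finset.sum_nonpos fun x _ => h x)
    (Finset.sum_nonneg fun x _ => hp.1 x)
  rw [hp.2] at this; norm_num at this

lemma elem_le_one {p : X → ℝ} (hp : IsDist p) (x : X) : p x ≤ 1 := by
  calc p x ≤ ∑ x', p x' := Finset.single_le_sum (fun x' _ => hp.1 x') (Finset.mem_univ x)
    _ = 1 := hp.2

lemma gsum_pos {t : ℝ} (hWpos : ∀ x s y, 0 < W x s y) (hWbpos : ∀ x s y, 0 < Wb x s y)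
    {pS : S → ℝ} {pSb : Sb → ℝ} (hpS : IsDist pS) (hpSb : IsDist pSb)
    {pX : X → ℝ} (hpX : IsDist pX) :
    0 < ∑ x, pX x * gfun W Wb t pS pSb x := by
  obtain ⟨x0, hx0⟩ := exists_pos_elem hpX
  have hg : ∀ x, 0 < gfun W Wb t pS pSb x := by
    intro x
    refine Finset.sum_pos (fun l _ => mul_pos ?_ ?_) univ_nonempty
    · exact Real.rpow_pos_of_pos (mix_pos hWpos hpS x l) _
    · exact Real.rpow_pos_of_pos (mix_pos hWbpos hpSb x l) _
  refine Finset.sum_pos' (fun x _ => mul_nonneg (hpX.1 x) (hg x).le) ?_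
  exact ⟨x0, Finset.mem_univ x0, mul_pos hx0 (hg x0)⟩

lemma exists_m {t : ℝ} (ht : t < 0) (hW : ∀ x s, IsDist (W x s))
    (hWb : ∀ x s, IsDist (Wb x s))
    (hWpos : ∀ x s y, 0 < W x s y) (hWbpos : ∀ x s y, 0 < Wb x s y)
    {η : ℝ} (hη : 0 < η) :
    ∃ m : (X → ℝ) → (S → ℝ) × (Sb → ℝ),
      (∀ p, IsDist (m p).1 ∧ IsDist (m p).2) ∧
      (∀ p : X → ℝ, (∀ x, 0 ≤ p x) →
        ∑ x, p x * (∑ l, (mix W (m p).1 x l) ^ (1-t) * (mix Wb (m p).2 x l) ^ t)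
          ≤ (∑ x, p x) * Real.exp (phiStarSh W Wb t + η)) := by
  have hW0 : ∀ x s y, 0 ≤ W x s y := fun x s y => (hWpos x s y).le
  have hWb0 : ∀ x s y, 0 ≤ Wb x s y := fun x s y => (hWbpos x s y).le
  -- global channel minimum
  obtain ⟨p0, -, hmin⟩ := Finset.exists_min_image (univ : Finset (X × S × Y))
    (fun p => W p.1 p.2.1 p.2.2) univ_nonempty
  set c1 : ℝ := W p0.1 p0.2.1 p0.2.2 with hc1def
  have hc1pos : 0 < c1 := hWpos _ _ _
  have hc1 : ∀ x s y, c1 ≤ W x s y := fun x s y => hmin (x, s, y) (Finset.mem_univ _)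
  have hc1mix : ∀ {pS : S → ℝ}, IsDist pS → ∀ x y, c1 ≤ mix W pS x y := by
    intro pS hpS x y
    calc c1 = ∑ s, pS s * c1 := by
          rw [← Finset.sum_mul, hpS.2, one_mul]
      _ ≤ ∑ s, pS s * W x s y :=
          Finset.sum_le_sum fun s _ => mul_le_mul_of_nonneg_left (hc1 x s y) (hpS.1 s)
  set SET : {p : X → ℝ // IsDist p} → Set ℝ := fun pX =>
    {v | ∃ pS : S → ℝ, IsDist pS ∧ ∃ pSb : Sb → ℝ, IsDist pSb ∧
      v = psiT t (mix W pS) (mix Wb pSb) pX.1} with hSET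
  have hphi : phiStarSh W Wb t = ⨆ pX, sInf (SET pX) := rfl
  have hmemunif : ∀ pX : {p : X → ℝ // IsDist p},
      psiT t (mix W (fun _ => (Fintype.card S : ℝ)⁻¹))
        (mix Wb (fun _ => (Fintype.card Sb : ℝ)⁻¹)) pX.1 ∈ SET pX :=
    fun pX => ⟨_, isDist_unif, _, isDist_unif, rfl⟩
  have hne : ∀ pX, (SET pX).Nonempty := fun pX => ⟨_, hmemunif pX⟩
  -- lower bound for all elements
  have hlb : ∀ pX, ∀ v ∈ SET pX, Real.log (c1 ^ (1-t)) ≤ v := by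
    rintro pX v ⟨pS, hpS, pSb, hpSb, rfl⟩
    have hgl : ∀ x, c1 ^ (1-t) ≤ gfun W Wb t pS pSb x := by
      intro x
      obtain ⟨l0⟩ : Nonempty Y := inferInstance
      calc c1 ^ (1-t) = c1 ^ (1-t) * 1 := (mul_one _).symm
        _ ≤ (mix W pS x l0) ^ (1-t) * (mix Wb pSb x l0) ^ t := by
            refine mul_le_mul ?_ ?_ zero_le_one (Real.rpow_nonneg ?_ _)
            · exact Real.rpow_le_rpow hc1pos.le (hc1mix hpS x l0) (by linarith)
            · exact Real.one_le_rpow_of_pos_of_le_one_of_nonpos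
                (mix_pos hWbpos hpSb x l0) (mix_le_one hWb hpSb x l0) ht.le
            · exact (mix_pos hWpos hpS x l0).le
        _ ≤ gfun W Wb t pS pSb x :=
            Finset.single_le_sum (fun l _ => mul_nonneg
              (Real.rpow_nonneg (mix_nonneg hW0 hpS x l) _)
              (Real.rpow_nonneg (mix_nonneg hWb0 hpSb x l) _)) (Finset.mem_univ l0)
    have hsum : c1 ^ (1-t) ≤ ∑ x, pX.1 x * gfun W Wb t pS pSb x := by
      calc c1 ^ (1-t) = ∑ x, pX.1 x * c1 ^ (1-t) := by
            rw [← Finset.sum_mul, pX.2.2, one_mul]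
        _ ≤ ∑ x, pX.1 x * gfun W Wb t pS pSb x :=
            Finset.sum_le_sum fun x _ => mul_le_mul_of_nonneg_left (hgl x) (pX.2.1 x)
    exact Real.log_le_log (Real.rpow_pos_of_pos hc1pos _) hsum
  have hbdd : ∀ pX, BddBelow (SET pX) := fun pX => ⟨_, fun v hv => hlb pX v hv⟩
  -- upper bound for the sInf's
  have hub : BddAbove (Set.range fun pX => sInf (SET pX)) := by
    refine ⟨Real.log (∑ x, gfun W Wb t (fun _ => (Fintype.card S : ℝ)⁻¹)
      (fun _ => (Fintype.card Sb : ℝ)⁻¹) x), ?_⟩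
    rintro v ⟨pX, rfl⟩
    refine le_trans (csInf_le (hbdd pX) (hmemunif pX)) ?_
    show Real.log (∑ x, pX.1 x * gfun W Wb t _ _ x) ≤ _
    refine Real.log_le_log (gsum_pos W Wb hWpos hWbpos isDist_unif isDist_unif pX.2) ?_
    refine Finset.sum_le_sum fun x _ => ?_
    calc pX.1 x * gfun W Wb t _ _ x ≤ 1 * gfun W Wb t _ _ x := by
          refine mul_le_mul_of_nonneg_right (elem_le_one pX.2 x) ?_
          exact gfun_nonneg W Wb t hW0 hWb0 isDist_unif isDist_unif x
      _ = _ := one_mul _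
  -- the good pair for each distribution
  have hgood : ∀ pX : {p : X → ℝ // IsDist p}, ∃ pS, ∃ pSb, IsDist pS ∧ IsDist pSb ∧
      ∑ x, pX.1 x * gfun W Wb t pS pSb x ≤ Real.exp (phiStarSh W Wb t + η) := by
    intro pX
    obtain ⟨v, hv, hvlt⟩ := Real.lt_sInf_add_pos (hne pX) hη
    obtain ⟨pS, hpS, pSb, hpSb, rfl⟩ := hv
    refine ⟨pS, pSb, hpS, hpSb, ?_⟩
    have h1 : sInf (SET pX) ≤ phiStarSh W Wb t := by
      rw [hphi]
      exact le_ciSup hub pX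
    have hpos := gsum_pos W Wb hWpos hWbpos hpS hpSb pX.2 (t := t)
    calc ∑ x, pX.1 x * gfun W Wb t pS pSb x
        = Real.exp (Real.log (∑ x, pX.1 x * gfun W Wb t pS pSb x)) :=
          (Real.exp_log hpos).symm
      _ ≤ Real.exp (phiStarSh W Wb t + η) := by
          rw [Real.exp_le_exp]
          have : psiT t (mix W pS) (mix Wb pSb) pX.1
              = Real.log (∑ x, pX.1 x * gfun W Wb t pS pSb x) := rfl
          rw [← this]
          linarith
  choose f1 f2 hd1 hd2 hb using hgood
  refine ⟨fun p => if hp : (∀ x, 0 ≤ p x) ∧ 0 < ∑ x, p x then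
      (f1 ⟨fun x => p x / ∑ x', p x', normalize_isDist hp.1 hp.2⟩,
       f2 ⟨fun x => p x / ∑ x', p x', normalize_isDist hp.1 hp.2⟩)
    else (fun _ => (Fintype.card S : ℝ)⁻¹, fun _ => (Fintype.card Sb : ℝ)⁻¹), ?_, ?_⟩
  · intro p
    dsimp only
    by_cases hp : (∀ x, 0 ≤ p x) ∧ 0 < ∑ x, p x
    · rw [dif_pos hp]
      exact ⟨hd1 _, hd2 _⟩
    · rw [dif_neg hp]
      exact ⟨isDist_unif, isDist_unif⟩
  · intro p hp0
    dsimp only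
    by_cases hps : 0 < ∑ x, p x
    · rw [dif_pos (⟨hp0, hps⟩ : (∀ x, 0 ≤ p x) ∧ 0 < ∑ x, p x)]
      set q : {p : X → ℝ // IsDist p} :=
        ⟨fun x => p x / ∑ x', p x', normalize_isDist hp0 hps⟩ with hqdef
      have hbq := hb q
      have hTne : (∑ x, p x) ≠ 0 := ne_of_gt hps
      have hrw : ∑ x, p x * (∑ l, (mix W (f1 q) x l) ^ (1-t) * (mix Wb (f2 q) x l) ^ t)
          = (∑ x, p x) * ∑ x, q.1 x * gfun W Wb t (f1 q) (f2 q) x := by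
        rw [Finset.mul_sum]
        refine Finset.sum_congr rfl fun x _ => ?_
        show p x * gfun W Wb t (f1 q) (f2 q) x
          = (∑ x', p x') * ((p x / ∑ x', p x') * gfun W Wb t (f1 q) (f2 q) x)
        field_simp
      rw [hrw]
      exact mul_le_mul_of_nonneg_left hbq hps.le
    · have hT0 : ∑ x, p x = 0 :=
        le_antisymm (not_lt.mp hps) (Finset.sum_nonneg fun x _ => hp0 x)
      have hall : ∀ x, p x = 0 := by
        intro x
        exact (Finset.sum_eq_zero_iff_of_nonneg fun x _ => hp0 x).mp hT0 x (Finset.mem_univ x)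
      calc _ = (0:ℝ) := Finset.sum_eq_zero fun x _ => by rw [hall x, zero_mul]
        _ ≤ _ := by rw [hT0, zero_mul]

end SCAux

namespace SCAux

variable {X Y S Sb : Type} [Fintype X] [Fintype Y] [Fintype S] [Fintype Sb]

lemma mix_ge {W : X → S → Y → ℝ} {pS : S → ℝ} (hpS : IsDist pS) {c : ℝ} {x : X} {y : Y}
    (h : ∀ s, c ≤ W x s y) : c ≤ mix W pS x y := by
  calc c = ∑ s, pS s * c := by rw [← Finset.sum_mul, hpS.2, one_mul]
    _ ≤ ∑ s, pS s * W x s y :=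
      Finset.sum_le_sum fun s _ => mul_le_mul_of_nonneg_left (h s) (hpS.1 s)

lemma mix_le {W : X → S → Y → ℝ} {pS : S → ℝ} (hpS : IsDist pS) {c : ℝ} {x : X} {y : Y}
    (h : ∀ s, W x s y ≤ c) : mix W pS x y ≤ c := by
  calc ∑ s, pS s * W x s y ≤ ∑ s, pS s * c :=
      Finset.sum_le_sum fun s _ => mul_le_mul_of_nonneg_left (h s) (hpS.1 s)
    _ = c := by rw [← Finset.sum_mul, hpS.2, one_mul]

variable [Nonempty X] [Nonempty Y] [Nonempty S] [Nonempty Sb]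

lemma rho_bound (W : X → S → Y → ℝ) (Wb : X → Sb → Y → ℝ)
    (hW : ∀ x s, IsDist (W x s)) (hWb : ∀ x s, IsDist (Wb x s))
    (hWpos : ∀ x s y, 0 < W x s y) (hWbpos : ∀ x s y, 0 < Wb x s y) :
    ∃ ρ : ℝ, 0 < ρ ∧ ∀ (n : ℕ) (sc : SRScheme X Y n),
      ρ ^ n * betaSh sc Wb ≤ 1 - alphaSh sc W := by
  obtain ⟨p0, -, hmin⟩ := Finset.exists_min_image (univ : Finset (X × S × Y))
    (fun p => W p.1 p.2.1 p.2.2) univ_nonempty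
  set c1 : ℝ := W p0.1 p0.2.1 p0.2.2 with hc1def
  have hc1pos : 0 < c1 := hWpos _ _ _
  have hc1 : ∀ x s y, c1 ≤ W x s y := fun x s y => hmin (x, s, y) (Finset.mem_univ _)
  obtain ⟨q0, -, hmax⟩ := Finset.exists_max_image (univ : Finset (X × Sb × Y))
    (fun p => Wb p.1 p.2.1 p.2.2) univ_nonempty
  set c2 : ℝ := Wb q0.1 q0.2.1 q0.2.2 with hc2def
  have hc2pos : 0 < c2 := hWbpos _ _ _
  have hc2 : ∀ x s y, Wb x s y ≤ c2 := fun x s y => hmax (x, s, y) (Finset.mem_univ _)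
  refine ⟨c1 / c2, div_pos hc1pos hc2pos, ?_⟩
  intro n sc
  set ρ : ℝ := c1 / c2 with hρdef
  have hρpos : 0 < ρ := div_pos hc1pos hc2pos
  have hρn : 0 < ρ ^ n := pow_pos hρpos n
  -- pointwise comparison of joint probabilities
  have hpoint : ∀ (a : AdvStrat Y S n) (ab : AdvStrat Y Sb n), ValidAdv a → ValidAdv ab →
      ∀ u (y : Fin n → Y), ρ ^ n * jointProb sc Wb ab u y ≤ jointProb sc W a u y := by
    intro a ab ha hab u y
    have hprod : ρ ^ n * ∏ i : Fin n, mix Wb (ab i (pre y i)) (sc.enc u i (pre y i)) (y i)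
        ≤ ∏ i : Fin n, mix W (a i (pre y i)) (sc.enc u i (pre y i)) (y i) := by
      have : ρ ^ n = ∏ _i : Fin n, ρ := by
        rw [Finset.prod_const, Finset.card_univ, Fintype.card_fin]
      rw [this, ← Finset.prod_mul_distrib]
      refine Finset.prod_le_prod (fun i _ => ?_) (fun i _ => ?_)
      · exact mul_nonneg hρpos.le (mix_nonneg (fun x s y => (hWbpos x s y).le)
          (hab i (pre y i)) _ _)
      · calc ρ * mix Wb (ab i (pre y i)) (sc.enc u i (pre y i)) (y i)
            ≤ ρ * c2 := mul_le_mul_of_nonneg_left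
              (mix_le (hab i (pre y i)) (fun s => hc2 _ s _)) hρpos.le
          _ = c1 := by rw [hρdef, div_mul_cancel₀ _ (ne_of_gt hc2pos)]
          _ ≤ mix W (a i (pre y i)) (sc.enc u i (pre y i)) (y i) :=
            mix_ge (ha i (pre y i)) (fun s => hc1 _ s _)
    show ρ ^ n * (sc.pU u * _) ≤ sc.pU u * _
    calc ρ ^ n * (sc.pU u * ∏ i : Fin n,
          mix Wb (ab i (pre y i)) (sc.enc u i (pre y i)) (y i))
        = sc.pU u * (ρ ^ n * ∏ i : Fin n,
          mix Wb (ab i (pre y i)) (sc.enc u i (pre y i)) (y i)) := by ring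
      _ ≤ sc.pU u * ∏ i : Fin n,
          mix W (a i (pre y i)) (sc.enc u i (pre y i)) (y i) :=
          mul_le_mul_of_nonneg_left hprod (sc.pU_nonneg u)
  -- comparison of the false-decision masses
  have hmass : ∀ (a : {a : AdvStrat Y S n // ValidAdv a})
      (ab : {a : AdvStrat Y Sb n // ValidAdv a}),
      ρ ^ n * (∑ u, ∑ y : Fin n → Y, jointProb sc Wb ab.1 u y *
          (if sc.dec u (inducedInputs sc u y) y = false then 1 else 0))
        ≤ ∑ u, ∑ y : Fin n → Y, jointProb sc W a.1 u y *
          (if sc.dec u (inducedInputs sc u y) y = false then 1 else 0) := by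
    intro a ab
    rw [Finset.mul_sum]
    refine Finset.sum_le_sum fun u _ => ?_
    rw [Finset.mul_sum]
    refine Finset.sum_le_sum fun y _ => ?_
    rw [← mul_assoc]
    refine mul_le_mul_of_nonneg_right (hpoint a.1 ab.1 a.2 ab.2 u y) ?_
    split <;> norm_num
  -- conclude
  have halpha : alphaSh sc W ≤ 1 - ρ ^ n * betaSh sc Wb := by
    refine ciSup_le fun a => ?_
    rw [jointProb_split sc W hW a.2]
    have hPD : ρ ^ n * betaSh sc Wb ≤ ∑ u, ∑ y : Fin n → Y, jointProb sc W a.1 u y *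
        (if sc.dec u (inducedInputs sc u y) y = false then 1 else 0) := by
      have h3 : betaSh sc Wb ≤ (∑ u, ∑ y : Fin n → Y, jointProb sc W a.1 u y *
          (if sc.dec u (inducedInputs sc u y) y = false then 1 else 0)) / ρ ^ n := by
        refine ciSup_le fun ab => ?_
        rw [le_div_iff₀ hρn, mul_comm]
        exact hmass a ab
      calc ρ ^ n * betaSh sc Wb ≤ ρ ^ n * ((∑ u, ∑ y : Fin n → Y, jointProb sc W a.1 u y *
            (if sc.dec u (inducedInputs sc u y) y = false then 1 else 0)) / ρ ^ n) :=
          mul_le_mul_of_nonneg_left h3 hρn.le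
        _ = _ := by rw [mul_div_cancel₀ _ (ne_of_gt hρn)]
    linarith
  have hbeta := betaSh_nonneg sc Wb hWb
  linarith [halpha]

end SCAux


set_option maxHeartbeats 1000000

/-- Strong converse with shared randomness: assuming the minimax-limit exchange
`lim_{t→0⁻} φ*_sh(t)/(-t) = D*_sh`, any sequence of shared-randomness schemes whose
type-2 errors decay with exponent exceeding `D*_sh` must have its probability of correct
decision under `H0` decay exponentially. -/
theorem shared_randomness_strong_converse
    {X Y S Sb : Type} [Fintype X] [Fintype Y] [Fintype S] [Fintype Sb]
    [Nonempty X] [Nonempty Y] [Nonempty S] [Nonempty Sb]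
    (W : X → S → Y → ℝ) (Wb : X → Sb → Y → ℝ)
    (hW : ∀ x s, IsDist (W x s)) (hWb : ∀ x s, IsDist (Wb x s))
    (hWpos : ∀ x s y, 0 < W x s y) (hWbpos : ∀ x s y, 0 < Wb x s y)
    (hExchange :
      Filter.Tendsto (fun t : ℝ => phiStarSh W Wb t / (-t))
        (nhdsWithin 0 (Set.Iio (0:ℝ))) (nhds (Dsh W Wb)))
    (sc : (n : ℕ) → SRScheme X Y n)
    (hβ : Dsh W Wb <
      Filter.liminf (fun n : ℕ => -(1/(n:ℝ)) * Real.log (betaSh (sc n) Wb))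
        Filter.atTop) :
    0 < Filter.liminf (fun n : ℕ => -(1/(n:ℝ)) * Real.log (1 - alphaSh (sc n) W))
        Filter.atTop := by
  classical
  set βseq : ℕ → ℝ := fun n => -(1/(n:ℝ)) * Real.log (betaSh (sc n) Wb) with hβseq
  set αseq : ℕ → ℝ := fun n => -(1/(n:ℝ)) * Real.log (1 - alphaSh (sc n) W) with hαseq
  have hβ0 : ∀ n, 0 ≤ βseq n := by
    intro n
    have h1 : Real.log (betaSh (sc n) Wb) ≤ 0 :=
      Real.log_nonpos (SCAux.betaSh_nonneg (sc n) Wb hWb) (SCAux.betaSh_le_one (sc n) Wb hWb)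
    have h2 : (0:ℝ) ≤ 1/(n:ℝ) := by positivity
    have := mul_nonneg h2 (neg_nonneg.mpr h1)
    simp only [hβseq]
    nlinarith
  have hD0 : 0 ≤ Dsh W Wb := SCAux.Dsh_nonneg W Wb hW hWb hWpos hWbpos
  rw [Filter.liminf_eq] at hβ
  set sβ := {a : ℝ | ∀ᶠ n in Filter.atTop, a ≤ βseq n} with hsβ
  have hsβne : sβ.Nonempty := ⟨0, Filter.Eventually.of_forall hβ0⟩
  have hsβbdd : BddAbove sβ := by
    by_contra h
    rw [Real.sSup_of_not_bddAbove h] at hβ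
    linarith
  obtain ⟨B, hBmem, hBgt⟩ := exists_lt_of_lt_csSup hsβne hβ
  have hBpos : 0 < B := lt_of_le_of_lt hD0 hBgt
  haveI : (nhdsWithin (0:ℝ) (Set.Iio 0)).NeBot := nhdsLT_neBot 0
  obtain ⟨t, htlt, htneg⟩ :=
    ((hExchange.eventually_lt_const hBgt).and eventually_mem_nhdsWithin).exists
  have ht : t < 0 := htneg
  have hnt : (0:ℝ) < -t := by linarith
  have h1t : (0:ℝ) < 1 - t := by linarith
  have hKneg : phiStarSh W Wb t + t * B < 0 := by
    have h2 := (div_lt_iff₀ hnt).mp htlt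
    have h3 : B * -t = -(t*B) := by ring
    linarith
  set η : ℝ := -(phiStarSh W Wb t + t * B)/2 with hηdef
  have hηpos : 0 < η := by rw [hηdef]; linarith
  set c0 : ℝ := -(phiStarSh W Wb t + η + t*B)/(1-t) with hc0def
  have hc0pos : 0 < c0 := by
    have he : phiStarSh W Wb t + η + t*B = (phiStarSh W Wb t + t*B)/2 := by
      rw [hηdef]; ring
    rw [hc0def, he]
    apply div_pos _ h1t
    linarith
  obtain ⟨m, hm2, hm1⟩ := SCAux.exists_m W Wb ht hW hWb hWpos hWbpos hηpos
  set E : ℝ := Real.exp (phiStarSh W Wb t + η) with hEdef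
  have hEpos : 0 < E := Real.exp_pos _
  obtain ⟨ρ, hρpos, hρ⟩ := SCAux.rho_bound W Wb hW hWb hWpos hWbpos
  -- the per-blocklength estimate
  have key : ∀ n : ℕ, 1 ≤ n → B ≤ βseq n →
      c0 ≤ αseq n ∧ αseq n ≤ -Real.log ρ + βseq n := by
    intro n hn hBn
    have hnpos : (0:ℝ) < n := by exact_mod_cast hn
    have hβn0 : 0 ≤ betaSh (sc n) Wb := SCAux.betaSh_nonneg (sc n) Wb hWb
    have hβpos : 0 < betaSh (sc n) Wb := by
      rcases eq_or_lt_of_le hβn0 with h | h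
      · exfalso
        simp only [hβseq] at hBn
        rw [← h, Real.log_zero, mul_zero] at hBn
        linarith
      · exact h
    have hβne : betaSh (sc n) Wb ≠ 0 := ne_of_gt hβpos
    have hlogβ : Real.log (betaSh (sc n) Wb) ≤ -((n:ℝ) * B) := by
      simp only [hβseq] at hBn
      have h4 : B * n ≤ -Real.log (betaSh (sc n) Wb) := by
        rw [show -(1/(n:ℝ)) * Real.log (betaSh (sc n) Wb)
            = -Real.log (betaSh (sc n) Wb) / n by ring] at hBn
        exact (le_div_iff₀ hnpos).mp hBn
      linarith [h4]
    have hβle : betaSh (sc n) Wb ≤ Real.exp (-((n:ℝ) * B)) := by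
      calc betaSh (sc n) Wb = Real.exp (Real.log (betaSh (sc n) Wb)) :=
            (Real.exp_log hβpos).symm
        _ ≤ _ := Real.exp_le_exp.mpr hlogβ
    -- adversaries from the tilted construction
    set a : AdvStrat Y S n := SCAux.advA (sc n) W Wb t m with hadef
    set ab : AdvStrat Y Sb n := SCAux.advB (sc n) W Wb t m with habdef
    have haV : ValidAdv a := SCAux.advA_valid (sc n) W Wb t m hm2
    have habV : ValidAdv ab := SCAux.advB_valid (sc n) W Wb t m hm2
    have hmain := SCAux.main_bound (sc n) W Wb t m ht hW hWb hm2 E hEpos.le hm1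
    rw [← hadef, ← habdef] at hmain
    -- decision-region masses
    set PD : ℝ := ∑ u, ∑ y : Fin n → Y, jointProb (sc n) W a u y *
        (if (sc n).dec u (inducedInputs (sc n) u y) y = false then 1 else 0) with hPDdef
    set QD : ℝ := ∑ u, ∑ y : Fin n → Y, jointProb (sc n) Wb ab u y *
        (if (sc n).dec u (inducedInputs (sc n) u y) y = false then 1 else 0) with hQDdef
    have h1mα : 1 - alphaSh (sc n) W ≤ PD := by
      have hv := SCAux.alphaSh_ge_value (sc n) W hW haV
      rw [SCAux.jointProb_split (sc n) W hW haV] at hv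
      rw [hPDdef]
      linarith
    have hQβ : QD ≤ betaSh (sc n) Wb := SCAux.betaSh_le_value (sc n) Wb hWb habV
    have hQD0 : 0 ≤ QD := by
      rw [hQDdef]
      refine Finset.sum_nonneg fun u _ => Finset.sum_nonneg fun y _ => mul_nonneg
        (SCAux.jointProb_nonneg (sc n) Wb (fun x s y => (hWbpos x s y).le) habV u y) ?_
      split <;> norm_num
    -- Hölder
    set pfun : (sc n).U × (Fin n → Y) → ℝ := fun z => jointProb (sc n) W a z.1 z.2 *
        (if (sc n).dec z.1 (inducedInputs (sc n) z.1 z.2) z.2 = false then 1 else 0) with hpfun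
    set qfun : (sc n).U × (Fin n → Y) → ℝ := fun z => jointProb (sc n) Wb ab z.1 z.2 *
        (if (sc n).dec z.1 (inducedInputs (sc n) z.1 z.2) z.2 = false then 1 else 0) with hqfun
    have hp0 : ∀ z, 0 ≤ pfun z := by
      intro z
      refine mul_nonneg (SCAux.jointProb_nonneg (sc n) W
        (fun x s y => (hWpos x s y).le) haV z.1 z.2) ?_
      split <;> norm_num
    have hq0 : ∀ z, 0 ≤ qfun z := by
      intro z
      refine mul_nonneg (SCAux.jointProb_nonneg (sc n) Wb
        (fun x s y => (hWbpos x s y).le) habV z.1 z.2) ?_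
      split <;> norm_num
    have hqp : ∀ z, qfun z = 0 → pfun z = 0 := by
      intro z hz
      simp only [hqfun, hpfun] at hz ⊢
      by_cases hd : (sc n).dec z.1 (inducedInputs (sc n) z.1 z.2) z.2 = false
      · rw [if_pos hd, mul_one] at hz
        rw [if_pos hd, mul_one]
        have hprod : 0 < ∏ i : Fin n, ∑ s, ab i (pre z.2 i) s *
            Wb ((sc n).enc z.1 i (pre z.2 i)) s (z.2 i) :=
          Finset.prod_pos fun i _ => SCAux.mix_pos hWbpos (habV i (pre z.2 i)) _ _
        have hpu : (sc n).pU z.1 = 0 := by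
          rcases mul_eq_zero.mp hz with h | h
          · exact h
          · exact absurd h (ne_of_gt hprod)
        show (sc n).pU z.1 * _ = 0
        rw [hpu, zero_mul]
      · rw [if_neg hd, mul_zero]
    have hHold := SCAux.holder_neg ht pfun qfun hp0 hq0 hqp
    have hsum_p : ∑ z : (sc n).U × (Fin n → Y), pfun z = PD := by
      rw [hPDdef]
      exact Fintype.sum_prod_type _
    have hsum_q : ∑ z : (sc n).U × (Fin n → Y), qfun z = QD := by
      rw [hQDdef]
      exact Fintype.sum_prod_type _
    have hPQ : ∑ z : (sc n).U × (Fin n → Y),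
        jointProb (sc n) W a z.1 z.2 ^ (1-t) * jointProb (sc n) Wb ab z.1 z.2 ^ t
        = ∑ u, ∑ y : Fin n → Y,
          jointProb (sc n) W a u y ^ (1-t) * jointProb (sc n) Wb ab u y ^ t :=
      Fintype.sum_prod_type _
    have hmid : ∑ z : (sc n).U × (Fin n → Y), pfun z ^ (1-t) * qfun z ^ t ≤ E ^ n := by
      refine le_trans ?_ (le_of_eq_of_le hPQ hmain)
      refine Finset.sum_le_sum fun z _ => ?_
      by_cases hd : (sc n).dec z.1 (inducedInputs (sc n) z.1 z.2) z.2 = false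
      · simp only [hpfun, hqfun, if_pos hd, mul_one]
        exact le_refl _
      · simp only [hpfun, hqfun, if_neg hd, mul_zero]
        rw [Real.zero_rpow (by linarith : (1:ℝ)-t ≠ 0), zero_mul]
        exact mul_nonneg (Real.rpow_nonneg (SCAux.jointProb_nonneg (sc n) W
          (fun x s y => (hWpos x s y).le) haV z.1 z.2) _)
          (Real.rpow_nonneg (SCAux.jointProb_nonneg (sc n) Wb
            (fun x s y => (hWbpos x s y).le) habV z.1 z.2) _)
    rw [hsum_p, hsum_q] at hHold
    -- combine
    have hexp1 : (0:ℝ) ≤ 1/(1-t) := by positivity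
    have hexp2 : (0:ℝ) ≤ -t/(1-t) := div_nonneg hnt.le h1t.le
    have hchain : 1 - alphaSh (sc n) W ≤ Real.exp (-((n:ℝ) * c0)) := by
      have hs1 : (∑ z : (sc n).U × (Fin n → Y), pfun z ^ (1-t) * qfun z ^ t) ^ (1/(1-t))
          ≤ (E ^ n) ^ (1/(1-t)) := by
        refine Real.rpow_le_rpow ?_ hmid hexp1
        exact Finset.sum_nonneg fun z _ => mul_nonneg
          (Real.rpow_nonneg (hp0 z) _) (Real.rpow_nonneg (hq0 z) _)
      have hs2 : QD ^ (-t/(1-t)) ≤ (Real.exp (-((n:ℝ) * B))) ^ (-t/(1-t)) :=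
        Real.rpow_le_rpow hQD0 (le_trans hQβ hβle) hexp2
      have hfinal : (E ^ n) ^ (1/(1-t)) * (Real.exp (-((n:ℝ) * B))) ^ (-t/(1-t))
          = Real.exp (-((n:ℝ) * c0)) := by
        rw [hEdef, ← Real.exp_nat_mul,
          Real.rpow_def_of_pos (Real.exp_pos _), Real.log_exp,
          Real.rpow_def_of_pos (Real.exp_pos _), Real.log_exp, ← Real.exp_add]
        congr 1
        rw [hc0def]
        field_simp
      calc 1 - alphaSh (sc n) W ≤ PD := h1mα
        _ ≤ (∑ z : (sc n).U × (Fin n → Y), pfun z ^ (1-t) * qfun z ^ t) ^ (1/(1-t))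
            * QD ^ (-t/(1-t)) := hHold
        _ ≤ (E ^ n) ^ (1/(1-t)) * (Real.exp (-((n:ℝ) * B))) ^ (-t/(1-t)) := by
            refine mul_le_mul hs1 hs2 (Real.rpow_nonneg hQD0 _) (Real.rpow_nonneg ?_ _)
            positivity
        _ = Real.exp (-((n:ℝ) * c0)) := hfinal
    have h1mαpos : 0 < 1 - alphaSh (sc n) W :=
      lt_of_lt_of_le (mul_pos (pow_pos hρpos n) hβpos) (hρ n (sc n))
    constructor
    · -- c0 ≤ αseq n
      have hlog : Real.log (1 - alphaSh (sc n) W) ≤ -((n:ℝ) * c0) := by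
        calc Real.log (1 - alphaSh (sc n) W)
            ≤ Real.log (Real.exp (-((n:ℝ) * c0))) := Real.log_le_log h1mαpos hchain
          _ = -((n:ℝ) * c0) := Real.log_exp _
      simp only [hαseq]
      have h5 : (1/(n:ℝ)) * ((n:ℝ) * c0) = c0 := by field_simp
      nlinarith [mul_le_mul_of_nonneg_left (neg_le_neg hlog)
        (show (0:ℝ) ≤ 1/(n:ℝ) by positivity)]
    · -- αseq n ≤ -log ρ + βseq n
      have hlow := hρ n (sc n)
      have hρβpos : 0 < ρ ^ n * betaSh (sc n) Wb := mul_pos (pow_pos hρpos n) hβpos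
      have hlog2 : (n:ℝ) * Real.log ρ + Real.log (betaSh (sc n) Wb)
          ≤ Real.log (1 - alphaSh (sc n) W) := by
        calc (n:ℝ) * Real.log ρ + Real.log (betaSh (sc n) Wb)
            = Real.log (ρ ^ n * betaSh (sc n) Wb) := by
              rw [Real.log_mul (ne_of_gt (pow_pos hρpos n)) hβne, Real.log_pow]
          _ ≤ _ := Real.log_le_log hρβpos hlow
      simp only [hαseq, hβseq]
      have h7 : (1/(n:ℝ)) * ((n:ℝ) * Real.log ρ + Real.log (betaSh (sc n) Wb))
          = Real.log ρ + (1/(n:ℝ)) * Real.log (betaSh (sc n) Wb) := by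
        field_simp
      linarith [mul_le_mul_of_nonneg_left hlog2 (show (0:ℝ) ≤ 1/(n:ℝ) by positivity), h7]
  -- conclude via the liminf characterization
  rw [Filter.liminf_eq]
  have hevB : ∀ᶠ n in Filter.atTop, B ≤ βseq n := hBmem
  have hev1 : ∀ᶠ n : ℕ in Filter.atTop, 1 ≤ n := Filter.eventually_ge_atTop 1
  have hc0mem : c0 ∈ {a : ℝ | ∀ᶠ n in Filter.atTop, a ≤ αseq n} := by
    filter_upwards [hevB, hev1] with n h1 h2
    exact (key n h2 h1).1
  have hsαbdd : BddAbove {a : ℝ | ∀ᶠ n in Filter.atTop, a ≤ αseq n} := by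
    obtain ⟨Mβ, hMβ⟩ := hsβbdd
    refine ⟨Mβ - Real.log ρ, ?_⟩
    rintro aa haa
    have hmem : aa + Real.log ρ ∈ sβ := by
      filter_upwards [haa, hevB, hev1] with n h1 h2 h3
      have := (key n h3 h2).2
      linarith
    have := hMβ hmem
    linarith
  exact lt_of_lt_of_le hc0pos (le_csSup hsαbdd hc0mem)
end

section
/- Private-randomness converse (Theorem: pvt_rand, impossibility part): If the pair (W,W̄) is trans-symmetrizable, then the Chernoff–Stein exponent with a privately randomized transmitter is zero: for every ε ∈ (0,1/2), E^ε_pvt(W,W̄) = 0. This holds even when both the transmitter and the adversary are adaptive. -/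
open Finset

/-- Mutual information `I(A;B)` of a joint pmf on `A × B`. -/
noncomputable def mi {A B : Type*} [Fintype A] [Fintype B] (p : A × B → ℝ) : ℝ :=
  ∑ a, ∑ b, p (a, b) * Real.log (p (a, b) / ((∑ b', p (a, b')) * (∑ a', p (a', b))))

/-- Conditional mutual information `I(A;B|C)` of a joint pmf on `A × B × C`. -/
noncomputable def cmi {A B C : Type*} [Fintype A] [Fintype B] [Fintype C]
    (p : A × B × C → ℝ) : ℝ :=
  ∑ a, ∑ b, ∑ c,
    p (a, b, c) * Real.log ((∑ a', ∑ b', p (a', b', c)) * p (a, b, c) /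
      ((∑ b', p (a, b', c)) * (∑ a', p (a', b, c))))

/-- The divergence `D(P_{X S Y} ‖ P_{X S} × W)` for a joint pmf `p` on `X × S × Y` and a
channel `W`. -/
noncomputable def condDivW {X S Y : Type*} [Fintype X] [Fintype S] [Fintype Y]
    (p : X × S × Y → ℝ) (W : X → S → Y → ℝ) : ℝ :=
  ∑ x, ∑ s, ∑ y,
    p (x, s, y) * Real.log (p (x, s, y) / ((∑ y', p (x, s, y')) * W x s y))

/-- `(W, W̄)` is trans-symmetrizable. -/
def TransSym {X Y S Sb : Type*} [Fintype S] [Fintype Sb]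
    (W : X → S → Y → ℝ) (Wb : X → Sb → Y → ℝ) : Prop :=
  ∃ (pS : X → S → ℝ) (pSb : X → Sb → ℝ),
    (∀ x, IsDist (pS x)) ∧ (∀ x, IsDist (pSb x)) ∧
    ∀ x x' y, ∑ s, pS x' s * W x s y = ∑ sb, pSb x sb * Wb x' sb y

section Joint
variable {X S Sb Y : Type*} [Fintype X] [Fintype S] [Fintype Sb] [Fintype Y]

/-- Marginal of `J` on `(X, S̄)`. -/
noncomputable def mXSb (J : X × X × Sb × S × Y → ℝ) : X × Sb → ℝ :=
  fun q => ∑ x', ∑ s, ∑ y, J (q.1, x', q.2, s, y)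

/-- Marginal of `J` on `(X', S)`. -/
noncomputable def mXpS (J : X × X × Sb × S × Y → ℝ) : X × S → ℝ :=
  fun q => ∑ x, ∑ sb, ∑ y, J (x, q.1, sb, q.2, y)

/-- Marginal of `J` on `(X, S̄, Y)`. -/
noncomputable def mXSbY (J : X × X × Sb × S × Y → ℝ) : X × Sb × Y → ℝ :=
  fun q => ∑ x', ∑ s, J (q.1, x', q.2.1, s, q.2.2)

/-- Marginal of `J` on `(X', S, Y)`. -/
noncomputable def mXpSY (J : X × X × Sb × S × Y → ℝ) : X × S × Y → ℝ :=
  fun q => ∑ x, ∑ sb, J (x, q.1, sb, q.2.1, q.2.2)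

/-- The pmf of `(X', (X,Y), S̄)`, used for `I(X'; XY | S̄)`. -/
noncomputable def jXpXYSb (J : X × X × Sb × S × Y → ℝ) : X × (X × Y) × Sb → ℝ :=
  fun q => ∑ s, J (q.2.1.1, q.1, q.2.2, s, q.2.1.2)

/-- The pmf of `(X, (X',Y), S)`, used for `I(X; X'Y | S)`. -/
noncomputable def jXXpYS (J : X × X × Sb × S × Y → ℝ) : X × (X × Y) × S → ℝ :=
  fun q => ∑ sb, J (q.1, q.2.1.1, sb, q.2.2, q.2.1.2)

/-- `Pr[X ≠ X']` under `J`. -/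
noncomputable def probNe [DecidableEq X] (J : X × X × Sb × S × Y → ℝ) : ℝ :=
  ∑ z ∈ univ.filter (fun z : X × X × Sb × S × Y => z.1 ≠ z.2.1), J z

/-- The forbidden condition in the definition of `η(P)`: the joint pmf
`J = P_{X X' S̄ S Y}` has both `X`- and `X'`-marginals equal to `P` and satisfies
`I(X;S̄) < η₁`, `D(P_{XS̄Y}‖P_{XS̄}×W̄) < η₂`, `I(X';S) < δ`, `D(P_{X'SY}‖P_{X'S}×W) < δ`,
and, in case `P(X ≠ X') > 0`, additionally `I(X';XY|S̄) < η₃` and `I(X;X'Y|S) < δ`. -/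
def BadJoint [DecidableEq X] (W : X → S → Y → ℝ) (Wb : X → Sb → Y → ℝ)
    (η₁ η₂ η₃ δ : ℝ) (P : X → ℝ) (J : X × X × Sb × S × Y → ℝ) : Prop :=
  IsDist J ∧
  (∀ x, (∑ x', ∑ sb, ∑ s, ∑ y, J (x, x', sb, s, y)) = P x) ∧
  (∀ x', (∑ x, ∑ sb, ∑ s, ∑ y, J (x, x', sb, s, y)) = P x') ∧
  mi (mXSb J) < η₁ ∧
  condDivW (mXSbY J) Wb < η₂ ∧
  mi (mXpS J) < δ ∧
  condDivW (mXpSY J) W < δ ∧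
  (0 < probNe J → cmi (jXpXYSb J) < η₃ ∧ cmi (jXXpYS J) < δ)

/-- `(η₁,η₂,η₃) ∈ η(P)`. -/
def etaMem [DecidableEq X] (W : X → S → Y → ℝ) (Wb : X → Sb → Y → ℝ)
    (P : X → ℝ) (η₁ η₂ η₃ : ℝ) : Prop :=
  ∃ δ > (0:ℝ), ∀ J : X × X × Sb × S × Y → ℝ, ¬ BadJoint W Wb η₁ η₂ η₃ δ P J

end Joint

section Private
variable {X Y S : Type*} [Fintype X] [Fintype Y] [Fintype S]

/-- Output probability of `y^n` when the transmitter picks the input word using its private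
randomness according to `μX` and the adversary picks the state word according to `ν`. -/
noncomputable def outProbPvt {n : ℕ} (W : X → S → Y → ℝ)
    (μX : (Fin n → X) → ℝ) (ν : (Fin n → S) → ℝ) (y : Fin n → Y) : ℝ :=
  ∑ xs : Fin n → X, ∑ sv : Fin n → S, μX xs * ν sv * ∏ i : Fin n, W (xs i) (sv i) (y i)

/-- Worst-case type-1 error of the private-randomness scheme `(μX, dec)`
(`dec y = true` means deciding `H1`). -/
noncomputable def alphaPvt {n : ℕ} (W : X → S → Y → ℝ)
    (μX : (Fin n → X) → ℝ) (dec : (Fin n → Y) → Bool) : ℝ :=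
  ⨆ ν : {ν : (Fin n → S) → ℝ // IsDist ν},
    ∑ y : Fin n → Y, outProbPvt W μX ν.1 y * (if dec y = true then 1 else 0)

/-- Worst-case type-2 error of the private-randomness scheme `(μX, dec)`. -/
noncomputable def betaPvt {n : ℕ} (W : X → S → Y → ℝ)
    (μX : (Fin n → X) → ℝ) (dec : (Fin n → Y) → Bool) : ℝ :=
  ⨆ ν : {ν : (Fin n → S) → ℝ // IsDist ν},
    ∑ y : Fin n → Y, outProbPvt W μX ν.1 y * (if dec y = false then 1 else 0)

end Private

/-- `β_n^ε` with a privately randomized transmitter. -/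
noncomputable def betaOptPvt {X Y S Sb : Type*} [Fintype X] [Fintype Y] [Fintype S]
    [Fintype Sb] (W : X → S → Y → ℝ) (Wb : X → Sb → Y → ℝ) (n : ℕ) (ε : ℝ) : ℝ :=
  sInf {b | ∃ μX : (Fin n → X) → ℝ, IsDist μX ∧ ∃ dec : (Fin n → Y) → Bool,
    alphaPvt W μX dec ≤ ε ∧ b = betaPvt Wb μX dec}

/-- The Chernoff–Stein exponent with a privately randomized transmitter. -/
noncomputable def Epvt {X Y S Sb : Type*} [Fintype X] [Fintype Y] [Fintype S] [Fintype Sb]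
    (W : X → S → Y → ℝ) (Wb : X → Sb → Y → ℝ) (ε : ℝ) : ℝ :=
  Filter.liminf (fun n : ℕ => -(1/(n:ℝ)) * Real.log (betaOptPvt W Wb n ε)) Filter.atTop


section AuxProof

variable {X Y S Sb : Type} [Fintype X] [Fintype Y] [Fintype S] [Fintype Sb]

/-- Sum over function space of a product equals product of sums. -/
lemma sum_prod_fn {n : ℕ} {Z : Type} [Fintype Z] (g : Fin n → Z → ℝ) :
    ∑ z : Fin n → Z, ∏ i, g i (z i) = ∏ i, ∑ b, g i b :=
  (Fintype.prod_sum g).symm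

/-- A point mass shows that the type of distributions is nonempty. -/
lemma distNonempty {Z : Type} [Fintype Z] [Nonempty Z] :
    Nonempty {ν : Z → ℝ // IsDist ν} := by
  classical
  refine ⟨⟨fun z => if z = Classical.arbitrary Z then 1 else 0, fun z => ?_, ?_⟩⟩
  · dsimp only; split <;> norm_num
  · simp

lemma outProbPvt_nonneg {n : ℕ} (W : X → S → Y → ℝ) (hW : ∀ x s, IsDist (W x s))
    (μ : (Fin n → X) → ℝ) (hμ : IsDist μ) (ν : (Fin n → S) → ℝ) (hν : IsDist ν)
    (y : Fin n → Y) : 0 ≤ outProbPvt W μ ν y := by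
  refine Finset.sum_nonneg fun xs _ => Finset.sum_nonneg fun sv _ => ?_
  exact mul_nonneg (mul_nonneg (hμ.1 _) (hν.1 _))
    (Finset.prod_nonneg fun i _ => (hW _ _).1 _)

lemma sum_outProbPvt {n : ℕ} (W : X → S → Y → ℝ) (hW : ∀ x s, IsDist (W x s))
    (μ : (Fin n → X) → ℝ) (hμ : IsDist μ) (ν : (Fin n → S) → ℝ) (hν : IsDist ν) :
    ∑ y : Fin n → Y, outProbPvt W μ ν y = 1 := by
  unfold outProbPvt
  rw [Finset.sum_comm]
  have h1 : ∀ xs : Fin n → X,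
      (∑ y : Fin n → Y, ∑ sv : Fin n → S,
        μ xs * ν sv * ∏ i, W (xs i) (sv i) (y i)) = μ xs * ∑ sv : Fin n → S, ν sv := by
    intro xs
    rw [Finset.sum_comm, Finset.mul_sum]
    refine Finset.sum_congr rfl fun sv _ => ?_
    rw [← Finset.mul_sum, sum_prod_fn (fun i b => W (xs i) (sv i) b)]
    have : ∀ i : Fin n, ∑ b, W (xs i) (sv i) b = 1 := fun i => (hW _ _).2
    simp [this]
  calc (∑ xs : Fin n → X, ∑ y : Fin n → Y, ∑ sv : Fin n → S,
          μ xs * ν sv * ∏ i, W (xs i) (sv i) (y i))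
      = ∑ xs : Fin n → X, μ xs * ∑ sv : Fin n → S, ν sv :=
        Finset.sum_congr rfl fun xs _ => h1 xs
    _ = 1 := by rw [hν.2]; simpa using hμ.2

/-- The probability of the decision region is at most one. -/
lemma sum_ind_le_one {n : ℕ} (W : X → S → Y → ℝ) (hW : ∀ x s, IsDist (W x s))
    (μ : (Fin n → X) → ℝ) (hμ : IsDist μ) (ν : (Fin n → S) → ℝ) (hν : IsDist ν)
    (c : (Fin n → Y) → Prop) [DecidablePred c] :
    ∑ y : Fin n → Y, outProbPvt W μ ν y * (if c y then 1 else 0) ≤ 1 := by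
  calc (∑ y : Fin n → Y, outProbPvt W μ ν y * (if c y then 1 else 0))
      ≤ ∑ y : Fin n → Y, outProbPvt W μ ν y := by
        refine Finset.sum_le_sum fun y _ => ?_
        have h0 := outProbPvt_nonneg W hW μ hμ ν hν y
        split <;> simp [h0]
    _ = 1 := sum_outProbPvt W hW μ hμ ν hν

/-- Output distribution when the adversary mixes states through a per-letter map. -/
lemma outProb_mix {n : ℕ} (V : X → S → Y → ℝ) (p : X → S → ℝ)
    (μ : (Fin n → X) → ℝ) (y : Fin n → Y) :
    outProbPvt V μ (fun sv => ∑ x' : Fin n → X, μ x' * ∏ i, p (x' i) (sv i)) y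
      = ∑ xs : Fin n → X, ∑ x' : Fin n → X,
          μ xs * μ x' * ∏ i, ∑ s, p (x' i) s * V (xs i) s (y i) := by
  unfold outProbPvt
  refine Finset.sum_congr rfl fun xs _ => ?_
  have h1 : ∀ sv : Fin n → S,
      μ xs * (∑ x' : Fin n → X, μ x' * ∏ i, p (x' i) (sv i)) * ∏ i, V (xs i) (sv i) (y i)
      = ∑ x' : Fin n → X, μ xs * μ x' *
          ∏ i, (p (x' i) (sv i) * V (xs i) (sv i) (y i)) := by
    intro sv
    rw [Finset.mul_sum, Finset.sum_mul]
    refine Finset.sum_congr rfl fun x' _ => ?_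
    rw [Finset.prod_mul_distrib]; ring
  simp_rw [h1]
  rw [Finset.sum_comm]
  refine Finset.sum_congr rfl fun x' _ => ?_
  rw [← Finset.mul_sum, sum_prod_fn (fun i s => p (x' i) s * V (xs i) s (y i))]

/-- The per-letter mixed adversary strategy is a distribution. -/
lemma nuDist {n : ℕ} (p : X → S → ℝ) (hp : ∀ x, IsDist (p x))
    (μ : (Fin n → X) → ℝ) (hμ : IsDist μ) :
    IsDist (fun sv : Fin n → S => ∑ x' : Fin n → X, μ x' * ∏ i, p (x' i) (sv i)) := by
  constructor
  · intro sv
    exact Finset.sum_nonneg fun x' _ => mul_nonneg (hμ.1 _)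
      (Finset.prod_nonneg fun i _ => (hp _).1 _)
  · rw [Finset.sum_comm]
    have : ∀ x' : Fin n → X,
        (∑ sv : Fin n → S, μ x' * ∏ i, p (x' i) (sv i)) = μ x' := by
      intro x'
      rw [← Finset.mul_sum, sum_prod_fn (fun i s => p (x' i) s)]
      have : ∀ i : Fin n, ∑ s, p (x' i) s = 1 := fun i => (hp _).2
      simp [this]
    rw [Finset.sum_congr rfl fun x' _ => this x']
    exact hμ.2

/-- Key simulation lemma: under trans-symmetrizability, there are adversary strategies
making the output distributions under the two hypotheses identical. -/
lemma exists_matching_nu {n : ℕ} (W : X → S → Y → ℝ) (Wb : X → Sb → Y → ℝ)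
    (hSym : TransSym W Wb) (μ : (Fin n → X) → ℝ) (hμ : IsDist μ) :
    ∃ (ν : (Fin n → S) → ℝ) (νb : (Fin n → Sb) → ℝ), IsDist ν ∧ IsDist νb ∧
      ∀ y : Fin n → Y, outProbPvt W μ ν y = outProbPvt Wb μ νb y := by
  obtain ⟨pS, pSb, hpS, hpSb, hsym⟩ := hSym
  refine ⟨fun sv => ∑ x' : Fin n → X, μ x' * ∏ i, pS (x' i) (sv i),
    fun sv => ∑ x' : Fin n → X, μ x' * ∏ i, pSb (x' i) (sv i),
    nuDist pS hpS μ hμ, nuDist pSb hpSb μ hμ, fun y => ?_⟩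
  rw [outProb_mix, outProb_mix, Finset.sum_comm]
  refine Finset.sum_congr rfl fun x' _ => Finset.sum_congr rfl fun xs _ => ?_
  have hprod : (∏ i, ∑ s, pS (x' i) s * W (xs i) s (y i))
      = ∏ i, ∑ sb, pSb (xs i) sb * Wb (x' i) sb (y i) :=
    Finset.prod_congr rfl fun i _ => hsym (xs i) (x' i) (y i)
  rw [hprod, mul_comm (μ xs) (μ x')]

variable [Nonempty X] [Nonempty Y] [Nonempty S] [Nonempty Sb]

lemma alphaBdd {n : ℕ} (W : X → S → Y → ℝ) (hW : ∀ x s, IsDist (W x s))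
    (μ : (Fin n → X) → ℝ) (hμ : IsDist μ) (dec : (Fin n → Y) → Bool) (b : Bool) :
    BddAbove (Set.range fun ν : {ν : (Fin n → S) → ℝ // IsDist ν} =>
      ∑ y : Fin n → Y, outProbPvt W μ ν.1 y * (if dec y = b then 1 else 0)) := by
  refine ⟨1, ?_⟩
  rintro _ ⟨ν, rfl⟩
  exact sum_ind_le_one W hW μ hμ ν.1 ν.2 _

lemma beta_ge_one_sub {n : ℕ} (W : X → S → Y → ℝ) (Wb : X → Sb → Y → ℝ)
    (hW : ∀ x s, IsDist (W x s)) (hWb : ∀ x s, IsDist (Wb x s))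
    (hSym : TransSym W Wb) (ε : ℝ)
    (μ : (Fin n → X) → ℝ) (hμ : IsDist μ) (dec : (Fin n → Y) → Bool)
    (hα : alphaPvt W μ dec ≤ ε) : 1 - ε ≤ betaPvt Wb μ dec := by
  obtain ⟨ν, νb, hν, hνb, heq⟩ := exists_matching_nu W Wb hSym μ hμ
  set A := ∑ y : Fin n → Y, outProbPvt W μ ν y * (if dec y = true then 1 else 0) with hA
  set B := ∑ y : Fin n → Y, outProbPvt Wb μ νb y * (if dec y = false then 1 else 0) with hB
  have hAα : A ≤ alphaPvt W μ dec :=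
    le_ciSup (alphaBdd W hW μ hμ dec true) (⟨ν, hν⟩ : {ν : (Fin n → S) → ℝ // IsDist ν})
  have hBβ : B ≤ betaPvt Wb μ dec :=
    le_ciSup (alphaBdd Wb hWb μ hμ dec false) (⟨νb, hνb⟩ : {ν : (Fin n → Sb) → ℝ // IsDist ν})
  have hAB : A + B = 1 := by
    rw [hA, hB, ← Finset.sum_add_distrib]
    have : ∀ y : Fin n → Y,
        outProbPvt W μ ν y * (if dec y = true then 1 else 0)
        + outProbPvt Wb μ νb y * (if dec y = false then 1 else 0)
        = outProbPvt W μ ν y := by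
      intro y
      rw [← heq y]
      cases h : dec y <;> simp
    rw [Finset.sum_congr rfl fun y _ => this y]
    exact sum_outProbPvt W hW μ hμ ν hν
  linarith

lemma betaOpt_bounds (W : X → S → Y → ℝ) (Wb : X → Sb → Y → ℝ)
    (hW : ∀ x s, IsDist (W x s)) (hWb : ∀ x s, IsDist (Wb x s))
    (hSym : TransSym W Wb) (n : ℕ) (ε : ℝ) (hε : 0 < ε) :
    1 - ε ≤ betaOptPvt W Wb n ε ∧ betaOptPvt W Wb n ε ≤ 1 := by
  classical
  obtain ⟨⟨μ0, hμ0⟩⟩ : Nonempty {μ : (Fin n → X) → ℝ // IsDist μ} := distNonempty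
  have hne : Nonempty {ν : (Fin n → S) → ℝ // IsDist ν} := distNonempty
  have hneb : Nonempty {ν : (Fin n → Sb) → ℝ // IsDist ν} := distNonempty
  set dec0 : (Fin n → Y) → Bool := fun _ => false with hdec0
  have hα0 : alphaPvt W μ0 dec0 ≤ ε := by
    unfold alphaPvt
    have : ∀ ν : {ν : (Fin n → S) → ℝ // IsDist ν},
        (∑ y : Fin n → Y, outProbPvt W μ0 ν.1 y * (if dec0 y = true then 1 else 0)) = 0 := by
      intro ν; simp [hdec0]
    simp only [this]
    rw [ciSup_const]
    exact le_of_lt hε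
  have hβ0 : betaPvt Wb μ0 dec0 = 1 := by
    unfold betaPvt
    have hval : (fun ν : {ν : (Fin n → Sb) → ℝ // IsDist ν} =>
        ∑ y : Fin n → Y, outProbPvt Wb μ0 ν.1 y * (if dec0 y = false then 1 else 0))
        = fun _ => (1:ℝ) := by
      funext ν
      simpa [hdec0] using sum_outProbPvt Wb hWb μ0 hμ0 ν.1 ν.2
    rw [hval]
    exact ciSup_const
  have hmem : betaPvt Wb μ0 dec0 ∈ {b | ∃ μX : (Fin n → X) → ℝ, IsDist μX ∧
      ∃ dec : (Fin n → Y) → Bool, alphaPvt W μX dec ≤ ε ∧ b = betaPvt Wb μX dec} :=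
    ⟨μ0, hμ0, dec0, hα0, rfl⟩
  have hlb : ∀ b ∈ {b | ∃ μX : (Fin n → X) → ℝ, IsDist μX ∧
      ∃ dec : (Fin n → Y) → Bool, alphaPvt W μX dec ≤ ε ∧ b = betaPvt Wb μX dec},
      1 - ε ≤ b := by
    rintro b ⟨μX, hμX, dec, hα, rfl⟩
    exact beta_ge_one_sub W Wb hW hWb hSym ε μX hμX dec hα
  constructor
  · exact le_csInf ⟨_, hmem⟩ hlb
  · calc betaOptPvt W Wb n ε ≤ betaPvt Wb μ0 dec0 := csInf_le ⟨1 - ε, hlb⟩ hmem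
      _ = 1 := hβ0

end AuxProof

/-- Private-randomness converse: if `(W,W̄)` is trans-symmetrizable then the
Chernoff–Stein exponent with a privately randomized transmitter is zero for every
`ε ∈ (0, 1/2)`. -/
theorem private_randomness_converse
    {X Y S Sb : Type} [Fintype X] [Fintype Y] [Fintype S] [Fintype Sb]
    [Nonempty X] [Nonempty Y] [Nonempty S] [Nonempty Sb]
    (W : X → S → Y → ℝ) (Wb : X → Sb → Y → ℝ)
    (hW : ∀ x s, IsDist (W x s)) (hWb : ∀ x s, IsDist (Wb x s))
    (hSym : TransSym W Wb)
    (ε : ℝ) (hε : ε ∈ Set.Ioo (0:ℝ) (1/2)) :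
    Epvt W Wb ε = 0 := by
  have hε1 : (0:ℝ) < 1 - ε := by have := hε.2; norm_num at this ⊢; linarith
  have hbounds := fun n => betaOpt_bounds W Wb hW hWb hSym n ε hε.1
  set f : ℕ → ℝ := fun n => -(1/(n:ℝ)) * Real.log (betaOptPvt W Wb n ε) with hf
  have htend : Filter.Tendsto f Filter.atTop (nhds 0) := by
    have hgtend : Filter.Tendsto (fun n : ℕ => (1/(n:ℝ)) * (-Real.log (1 - ε)))
        Filter.atTop (nhds 0) := by
      have := tendsto_one_div_atTop_nhds_zero_nat.mul_const (-Real.log (1 - ε))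
      simpa using this
    refine tendsto_of_tendsto_of_tendsto_of_le_of_le' tendsto_const_nhds hgtend ?_ ?_
    · filter_upwards [Filter.eventually_ge_atTop 1] with n hn
      have hβu := (hbounds n).2
      have hβl := (hbounds n).1
      have hβpos : (0:ℝ) < betaOptPvt W Wb n ε := lt_of_lt_of_le hε1 hβl
      have hlog : Real.log (betaOptPvt W Wb n ε) ≤ 0 :=
        Real.log_nonpos (le_of_lt hβpos) hβu
      have hninv : (0:ℝ) ≤ 1/(n:ℝ) := by positivity
      have : (0:ℝ) ≤ (1/(n:ℝ)) * (-Real.log (betaOptPvt W Wb n ε)) :=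
        mul_nonneg hninv (by linarith)
      simpa [hf, neg_mul, mul_neg] using this
    · filter_upwards [Filter.eventually_ge_atTop 1] with n hn
      have hβl := (hbounds n).1
      have hlog : Real.log (1 - ε) ≤ Real.log (betaOptPvt W Wb n ε) :=
        Real.log_le_log hε1 hβl
      have hninv : (0:ℝ) ≤ 1/(n:ℝ) := by positivity
      have : (1/(n:ℝ)) * (-Real.log (betaOptPvt W Wb n ε))
          ≤ (1/(n:ℝ)) * (-Real.log (1 - ε)) :=
        mul_le_mul_of_nonneg_left (by linarith) hninv
      simpa [hf, neg_mul, mul_neg] using this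
  exact htend.liminf_eq
end

section
/- Multiplicative chain rule for the Hellinger-type integral φ_t under a common transmitter strategy: Fix t < 0. Let Q⃗_i(x_i | x^{i−1}, y^{i−1}), i = 1,…,n, be transmitter kernels, and let Q_{Y_i|X_i} and Q̄_{Y_i|X_i} be per-letter channels with all entries positive. Define joint pmfs on X^n × Y^n by Q^n(x^n,y^n) = Π_{i=1}^n Q⃗_i(x_i|x^{i−1},y^{i−1}) Q_{Y_i|X_i}(y_i|x_i) and Q̄^n(x^n,y^n) = Π_{i=1}^n Q⃗_i(x_i|x^{i−1},y^{i−1}) Q̄_{Y_i|X_i}(y_i|x_i). Define the tilted pmf Q̃^{i−1} := (Q^{i−1})^{1−t}(Q̄^{i−1})^t / φ_t(Q^{i−1}‖Q̄^{i−1}) and the tilted input marginal Q̃_{X_i}(x) := Σ_{x^{i−1},y^{i−1}} Q̃^{i−1}(x^{i−1},y^{i−1}) Q⃗_i(x|x^{i−1},y^{i−1}). Then φ_t(Q^n‖Q̄^n) = Π_{i=1}^n φ_t(Q_{Y_i|X_i}‖Q̄_{Y_i|X_i} | Q̃_{X_i}); equivalently, log φ_t(Q^n‖Q̄^n) = Σ_{i=1}^n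 ψ_t(Q_{Y_i|X_i}‖Q̄_{Y_i|X_i} | Q̃_{X_i}). -/
open Finset

/-- `φ_t(μ‖ν) = Σ_z μ(z)^{1-t} ν(z)^t` for pmfs on a finite set. -/
noncomputable def phiT {Z : Type*} [Fintype Z] (t : ℝ) (μ ν : Z → ℝ) : ℝ :=
  ∑ z, μ z ^ (1 - t) * ν z ^ t

/-- `φ_t(V‖V̄|μ_X) = Σ_x μ_X(x) Σ_y V(y|x)^{1-t} V̄(y|x)^t`. -/
noncomputable def phiTCond {X Y : Type*} [Fintype X] [Fintype Y] (t : ℝ)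
    (V Vb : X → Y → ℝ) (μX : X → ℝ) : ℝ :=
  ∑ x, μX x * ∑ y, V x y ^ (1 - t) * Vb x y ^ t

section ChainRule
variable {X Y : Type*} [Fintype X] [Fintype Y] {n : ℕ}

/-- The joint pmf `Q^n` on `X^n × Y^n` generated by transmitter kernels `T` and
per-letter channels `V`. -/
noncomputable def Qfull
    (T : (i : Fin n) → (Fin i.val → X) → (Fin i.val → Y) → X → ℝ)
    (V : Fin n → X → Y → ℝ) : (Fin n → X) × (Fin n → Y) → ℝ :=
  fun p => ∏ i : Fin n, T i (pre p.1 i) (pre p.2 i) (p.1 i) * V i (p.1 i) (p.2 i)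

/-- The prefix joint pmf `Q^{i-1}` on histories of length `i`. -/
noncomputable def Qpre
    (T : (i : Fin n) → (Fin i.val → X) → (Fin i.val → Y) → X → ℝ)
    (V : Fin n → X → Y → ℝ) (i : Fin n)
    (x : Fin i.val → X) (y : Fin i.val → Y) : ℝ :=
  ∏ j : Fin i.val,
    T (Fin.castLE i.isLt.le j) (fun k => x (Fin.castLE j.isLt.le k))
        (fun k => y (Fin.castLE j.isLt.le k)) (x j) *
      V (Fin.castLE i.isLt.le j) (x j) (y j)

/-- `φ_t(Q^{i-1} ‖ Q̄^{i-1})`. -/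
noncomputable def phiPre (t : ℝ)
    (T : (i : Fin n) → (Fin i.val → X) → (Fin i.val → Y) → X → ℝ)
    (V Vb : Fin n → X → Y → ℝ) (i : Fin n) : ℝ :=
  ∑ x : Fin i.val → X, ∑ y : Fin i.val → Y,
    (Qpre T V i x y) ^ (1 - t) * (Qpre T Vb i x y) ^ t

/-- The tilted input marginal `Q̃_{X_i}`, obtained by pushing the tilted prefix pmf
`Q̃^{i-1} = (Q^{i-1})^{1-t}(Q̄^{i-1})^t / φ_t(Q^{i-1}‖Q̄^{i-1})` through the transmitter
kernel `T_i`. -/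
noncomputable def tiltedInput (t : ℝ)
    (T : (i : Fin n) → (Fin i.val → X) → (Fin i.val → Y) → X → ℝ)
    (V Vb : Fin n → X → Y → ℝ) (i : Fin n) : X → ℝ :=
  fun a => ∑ x : Fin i.val → X, ∑ y : Fin i.val → Y,
    ((Qpre T V i x y) ^ (1 - t) * (Qpre T Vb i x y) ^ t / phiPre t T V Vb i) * T i x y a

end ChainRule

section ChainRuleAux

lemma sum_snoc' {Z : Type} [Fintype Z] {m : ℕ} (g : (Fin (m+1) → Z) → ℝ) :
    ∑ f : Fin (m+1) → Z, g f = ∑ x : Fin m → Z, ∑ a : Z, g (Fin.snoc x a) := by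
  rw [← Fintype.sum_equiv (Fin.snocEquiv fun _ => Z)
    (fun p => g (Fin.snoc p.2 p.1)) g (fun p => rfl)]
  rw [Fintype.sum_prod_type]
  exact Finset.sum_comm

variable {X Y : Type} [Fintype X] [Fintype Y] {n : ℕ}

/-- Length-`m` prefix pmf, with a bare `ℕ` length. -/
noncomputable def QpreM
    (T : (i : Fin n) → (Fin i.val → X) → (Fin i.val → Y) → X → ℝ)
    (V : Fin n → X → Y → ℝ) (m : ℕ) (h : m ≤ n)
    (x : Fin m → X) (y : Fin m → Y) : ℝ :=
  ∏ j : Fin m,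
    T (Fin.castLE h j) (fun k => x (Fin.castLE j.isLt.le k))
        (fun k => y (Fin.castLE j.isLt.le k)) (x j) *
      V (Fin.castLE h j) (x j) (y j)

lemma QpreM_succ
    (T : (i : Fin n) → (Fin i.val → X) → (Fin i.val → Y) → X → ℝ)
    (V : Fin n → X → Y → ℝ)
    (m : ℕ) (h : m + 1 ≤ n) (x : Fin m → X) (y : Fin m → Y) (a : X) (b : Y) :
    QpreM T V (m+1) h (Fin.snoc x a) (Fin.snoc y b) =
      QpreM T V m (Nat.le_of_succ_le h) x y *
        (T ⟨m, h⟩ x y a * V ⟨m, h⟩ a b) := by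
  unfold QpreM
  rw [Fin.prod_univ_castSucc]
  congr 1
  · apply Finset.prod_congr rfl
    intro j _
    have hx : ∀ k : Fin j.val,
        (Fin.snoc x a : Fin (m+1) → X) (Fin.castLE (j.castSucc).isLt.le k)
          = x (Fin.castLE j.isLt.le k) := by
      intro k
      have : Fin.castLE (j.castSucc).isLt.le k
          = Fin.castSucc (Fin.castLE j.isLt.le k) := rfl
      rw [this, Fin.snoc_castSucc]
    have hy : ∀ k : Fin j.val,
        (Fin.snoc y b : Fin (m+1) → Y) (Fin.castLE (j.castSucc).isLt.le k)
          = y (Fin.castLE j.isLt.le k) := by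
      intro k
      have : Fin.castLE (j.castSucc).isLt.le k
          = Fin.castSucc (Fin.castLE j.isLt.le k) := rfl
      rw [this, Fin.snoc_castSucc]
    simp only [Fin.snoc_castSucc]
    congr 1
    · congr 1
      · funext k; exact hx k
      · funext k; exact hy k
  · show T ⟨m, h⟩ (fun k : Fin m => (Fin.snoc x a : Fin (m+1) → X) k.castSucc)
        (fun k : Fin m => (Fin.snoc y b : Fin (m+1) → Y) k.castSucc)
        ((Fin.snoc x a : Fin (m+1) → X) (Fin.last m)) *
      V ⟨m, h⟩ ((Fin.snoc x a : Fin (m+1) → X) (Fin.last m))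
        ((Fin.snoc y b : Fin (m+1) → Y) (Fin.last m)) = _
    simp [Fin.snoc_castSucc, Fin.snoc_last]

/-- `φ_t` of the length-`m` prefix. -/
noncomputable def phiM (t : ℝ)
    (T : (i : Fin n) → (Fin i.val → X) → (Fin i.val → Y) → X → ℝ)
    (V Vb : Fin n → X → Y → ℝ) (m : ℕ) (h : m ≤ n) : ℝ :=
  ∑ x : Fin m → X, ∑ y : Fin m → Y,
    (QpreM T V m h x y) ^ (1 - t) * (QpreM T Vb m h x y) ^ t

lemma QpreM_nonneg
    (T : (i : Fin n) → (Fin i.val → X) → (Fin i.val → Y) → X → ℝ)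
    (V : Fin n → X → Y → ℝ)
    (hT : ∀ i x y, IsDist (T i x y)) (hVpos : ∀ i x y, 0 < V i x y)
    (m : ℕ) (h : m ≤ n) (x : Fin m → X) (y : Fin m → Y) :
    0 ≤ QpreM T V m h x y :=
  Finset.prod_nonneg fun j _ => mul_nonneg ((hT _ _ _).1 _) (hVpos _ _ _).le

lemma QpreM_zero_iff
    (T : (i : Fin n) → (Fin i.val → X) → (Fin i.val → Y) → X → ℝ)
    (V Vb : Fin n → X → Y → ℝ)
    (hVpos : ∀ i x y, 0 < V i x y) (hVbpos : ∀ i x y, 0 < Vb i x y)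
    (m : ℕ) (h : m ≤ n) (x : Fin m → X) (y : Fin m → Y) :
    QpreM T V m h x y = 0 ↔ QpreM T Vb m h x y = 0 := by
  unfold QpreM
  rw [Finset.prod_eq_zero_iff, Finset.prod_eq_zero_iff]
  constructor <;> rintro ⟨j, hj, hj0⟩ <;> refine ⟨j, hj, ?_⟩
  · rcases mul_eq_zero.1 hj0 with h0 | h0
    · rw [h0, zero_mul]
    · exact absurd h0 (hVpos _ _ _).ne'
  · rcases mul_eq_zero.1 hj0 with h0 | h0
    · rw [h0, zero_mul]
    · exact absurd h0 (hVbpos _ _ _).ne'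

lemma key_pt {t : ℝ} (ht : t < 0) {p q c v vb : ℝ}
    (hp : 0 ≤ p) (hq : 0 ≤ q) (hc : 0 ≤ c) (hv : 0 < v) (hvb : 0 < vb)
    (hpq : p = 0 ↔ q = 0) :
    (p * (c * v)) ^ (1 - t) * (q * (c * vb)) ^ t =
      p ^ (1 - t) * q ^ t * (c * (v ^ (1 - t) * vb ^ t)) := by
  have ht1 : (1 : ℝ) - t ≠ 0 := by linarith
  have ht0 : t ≠ 0 := ht.ne
  rcases eq_or_lt_of_le hc with hc0 | hcpos
  · simp [← hc0, Real.zero_rpow ht1, Real.zero_rpow ht0]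
  rcases eq_or_lt_of_le hp with hp0 | hppos
  · have hq0 : q = 0 := hpq.1 hp0.symm
    simp [← hp0, hq0, Real.zero_rpow ht1, Real.zero_rpow ht0]
  have hqpos : 0 < q := lt_of_le_of_ne hq (fun h0 => (hppos.ne' (hpq.2 h0.symm)))
  rw [Real.mul_rpow hppos.le (by positivity), Real.mul_rpow hcpos.le hv.le,
    Real.mul_rpow hqpos.le (by positivity), Real.mul_rpow hcpos.le hvb.le]
  have hcc : c ^ (1 - t) * c ^ t = c := by
    rw [← Real.rpow_add hcpos, sub_add_cancel, Real.rpow_one]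
  calc p ^ (1 - t) * (c ^ (1 - t) * v ^ (1 - t)) * (q ^ t * (c ^ t * vb ^ t))
      = p ^ (1 - t) * q ^ t * ((c ^ (1 - t) * c ^ t) * (v ^ (1 - t) * vb ^ t)) := by ring
    _ = _ := by rw [hcc]

end ChainRuleAux


section ChainRuleStep
variable {X Y : Type} [Fintype X] [Fintype Y] {n : ℕ}

lemma phiM_succ {t : ℝ} (ht : t < 0)
    (T : (i : Fin n) → (Fin i.val → X) → (Fin i.val → Y) → X → ℝ)
    (hT : ∀ i x y, IsDist (T i x y))
    (V Vb : Fin n → X → Y → ℝ)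
    (hVpos : ∀ i x y, 0 < V i x y) (hVbpos : ∀ i x y, 0 < Vb i x y)
    (m : ℕ) (h : m + 1 ≤ n)
    (hne : phiM t T V Vb m (Nat.le_of_succ_le h) ≠ 0) :
    phiM t T V Vb (m+1) h = phiM t T V Vb m (Nat.le_of_succ_le h) *
      phiTCond t (V ⟨m, h⟩) (Vb ⟨m, h⟩) (tiltedInput t T V Vb ⟨m, h⟩) := by
  have h' : m ≤ n := Nat.le_of_succ_le h
  -- abbreviations (as plain defs via `let` would hamper rewriting; we inline)
  have stepA : phiM t T V Vb (m+1) h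
      = ∑ x : Fin m → X, ∑ a : X, ∑ y : Fin m → Y, ∑ b : Y,
          (QpreM T V m h' x y ^ (1-t) * QpreM T Vb m h' x y ^ t) *
            (T ⟨m, h⟩ x y a *
              (V ⟨m, h⟩ a b ^ (1-t) * Vb ⟨m, h⟩ a b ^ t)) := by
    simp only [phiM, sum_snoc', QpreM_succ]
    refine Finset.sum_congr rfl fun x _ => ?_
    refine Finset.sum_congr rfl fun a _ => ?_
    refine Finset.sum_congr rfl fun y _ => ?_
    refine Finset.sum_congr rfl fun b _ => ?_
    exact key_pt ht (QpreM_nonneg T V hT hVpos m h' x y)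
      (QpreM_nonneg T Vb hT hVbpos m h' x y) ((hT _ _ _).1 a)
      (hVpos _ _ _) (hVbpos _ _ _)
      (QpreM_zero_iff T V Vb hVpos hVbpos m h' x y)
  have stepB : (∑ x : Fin m → X, ∑ a : X, ∑ y : Fin m → Y, ∑ b : Y,
          (QpreM T V m h' x y ^ (1-t) * QpreM T Vb m h' x y ^ t) *
            (T ⟨m, h⟩ x y a *
              (V ⟨m, h⟩ a b ^ (1-t) * Vb ⟨m, h⟩ a b ^ t)))
      = ∑ x : Fin m → X, ∑ y : Fin m → Y,
          (QpreM T V m h' x y ^ (1-t) * QpreM T Vb m h' x y ^ t) *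
            ∑ a : X, T ⟨m, h⟩ x y a *
              ∑ b : Y, V ⟨m, h⟩ a b ^ (1-t) * Vb ⟨m, h⟩ a b ^ t := by
    refine Finset.sum_congr rfl fun x _ => ?_
    rw [Finset.sum_comm]
    refine Finset.sum_congr rfl fun y _ => ?_
    simp only [← Finset.mul_sum]
  have stepC : phiM t T V Vb m h' *
        phiTCond t (V ⟨m, h⟩) (Vb ⟨m, h⟩) (tiltedInput t T V Vb ⟨m, h⟩)
      = ∑ x : Fin m → X, ∑ y : Fin m → Y,
          (QpreM T V m h' x y ^ (1-t) * QpreM T Vb m h' x y ^ t) *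
            ∑ a : X, T ⟨m, h⟩ x y a *
              ∑ b : Y, V ⟨m, h⟩ a b ^ (1-t) * Vb ⟨m, h⟩ a b ^ t := by
    have htilt : tiltedInput t T V Vb ⟨m, h⟩ = fun a =>
        ∑ x : Fin m → X, ∑ y : Fin m → Y,
          (QpreM T V m h' x y ^ (1-t) * QpreM T Vb m h' x y ^ t /
              phiM t T V Vb m h') * T ⟨m, h⟩ x y a := rfl
    rw [phiTCond, htilt, Finset.mul_sum]
    have hS : ∀ (x : Fin m → X) (y : Fin m → Y) (a : X),
        phiM t T V Vb m h' *
          ((QpreM T V m h' x y ^ (1-t) * QpreM T Vb m h' x y ^ t /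
              phiM t T V Vb m h') * T ⟨m, h⟩ x y a)
        = (QpreM T V m h' x y ^ (1-t) * QpreM T Vb m h' x y ^ t) *
            T ⟨m, h⟩ x y a := by
      intro x y a
      field_simp
    calc ∑ a : X, phiM t T V Vb m h' *
          ((∑ x : Fin m → X, ∑ y : Fin m → Y,
            (QpreM T V m h' x y ^ (1-t) * QpreM T Vb m h' x y ^ t /
              phiM t T V Vb m h') * T ⟨m, h⟩ x y a) *
            ∑ b : Y, V ⟨m, h⟩ a b ^ (1-t) * Vb ⟨m, h⟩ a b ^ t)
        = ∑ a : X, ∑ x : Fin m → X, ∑ y : Fin m → Y,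
            ((QpreM T V m h' x y ^ (1-t) * QpreM T Vb m h' x y ^ t) *
              (T ⟨m, h⟩ x y a *
                ∑ b : Y, V ⟨m, h⟩ a b ^ (1-t) * Vb ⟨m, h⟩ a b ^ t)) := by
          refine Finset.sum_congr rfl fun a _ => ?_
          rw [← mul_assoc]
          have hSm : phiM t T V Vb m h' *
              (∑ x : Fin m → X, ∑ y : Fin m → Y,
                (QpreM T V m h' x y ^ (1-t) * QpreM T Vb m h' x y ^ t /
                  phiM t T V Vb m h') * T ⟨m, h⟩ x y a)
              = ∑ x : Fin m → X, ∑ y : Fin m → Y,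
                (QpreM T V m h' x y ^ (1-t) * QpreM T Vb m h' x y ^ t) *
                  T ⟨m, h⟩ x y a := by
            rw [Finset.mul_sum]
            refine Finset.sum_congr rfl fun x _ => ?_
            rw [Finset.mul_sum]
            exact Finset.sum_congr rfl fun y _ => hS x y a
          rw [hSm, Finset.sum_mul]
          refine Finset.sum_congr rfl fun x _ => ?_
          rw [Finset.sum_mul]
          refine Finset.sum_congr rfl fun y _ => ?_
          rw [mul_assoc]
      _ = _ := by
          rw [Finset.sum_comm]
          refine Finset.sum_congr rfl fun x _ => ?_
          rw [Finset.sum_comm]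
          refine Finset.sum_congr rfl fun y _ => ?_
          simp only [← Finset.mul_sum]
  rw [stepA, stepB, ← stepC]
end ChainRuleStep


section ChainRulePos
variable {X Y : Type} [Fintype X] [Fintype Y] {n : ℕ}

lemma phiTCond_pos [Nonempty X] [Nonempty Y] {t : ℝ} (ht : t < 0)
    (T : (i : Fin n) → (Fin i.val → X) → (Fin i.val → Y) → X → ℝ)
    (hT : ∀ i x y, IsDist (T i x y))
    (V Vb : Fin n → X → Y → ℝ)
    (hVpos : ∀ i x y, 0 < V i x y) (hVbpos : ∀ i x y, 0 < Vb i x y)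
    (i : Fin n) (hpos : 0 < phiPre t T V Vb i) :
    0 < phiTCond t (V i) (Vb i) (tiltedInput t T V Vb i) := by
  have hc : ∀ a : X, 0 < ∑ b : Y, V i a b ^ (1 - t) * Vb i a b ^ t :=
    fun a => Finset.sum_pos
      (fun b _ => mul_pos (Real.rpow_pos_of_pos (hVpos i a b) _)
        (Real.rpow_pos_of_pos (hVbpos i a b) _)) Finset.univ_nonempty
  have hμnn : ∀ a : X, 0 ≤ tiltedInput t T V Vb i a := by
    intro a
    refine Finset.sum_nonneg fun x _ => Finset.sum_nonneg fun y _ => ?_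
    refine mul_nonneg (div_nonneg (mul_nonneg ?_ ?_) hpos.le) ((hT _ _ _).1 a)
    · exact Real.rpow_nonneg (Finset.prod_nonneg fun j _ =>
        mul_nonneg ((hT _ _ _).1 _) (hVpos _ _ _).le) _
    · exact Real.rpow_nonneg (Finset.prod_nonneg fun j _ =>
        mul_nonneg ((hT _ _ _).1 _) (hVbpos _ _ _).le) _
  have hsum : ∑ a : X, tiltedInput t T V Vb i a = 1 := by
    simp only [tiltedInput]
    rw [Finset.sum_comm]
    have : ∀ x : Fin i.val → X,
        (∑ a : X, ∑ y : Fin i.val → Y,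
          (Qpre T V i x y ^ (1 - t) * Qpre T Vb i x y ^ t / phiPre t T V Vb i) *
            T i x y a)
        = ∑ y : Fin i.val → Y,
            Qpre T V i x y ^ (1 - t) * Qpre T Vb i x y ^ t / phiPre t T V Vb i := by
      intro x
      rw [Finset.sum_comm]
      refine Finset.sum_congr rfl fun y _ => ?_
      rw [← Finset.mul_sum, (hT i x y).2, mul_one]
    rw [Finset.sum_congr rfl fun x _ => this x]
    simp only [← Finset.sum_div]
    rw [← phiPre, div_self hpos.ne']
  have hex : ∃ a : X, 0 < tiltedInput t T V Vb i a := by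
    by_contra hcon
    push_neg at hcon
    have hle : ∑ a : X, tiltedInput t T V Vb i a ≤ 0 :=
      Finset.sum_nonpos fun a _ => hcon a
    rw [hsum] at hle; linarith
  obtain ⟨a, ha⟩ := hex
  refine Finset.sum_pos' (fun a' _ => mul_nonneg (hμnn a') (hc a').le)
    ⟨a, Finset.mem_univ a, mul_pos ha (hc a)⟩

lemma phiM_master [Nonempty X] [Nonempty Y] {t : ℝ} (ht : t < 0)
    (T : (i : Fin n) → (Fin i.val → X) → (Fin i.val → Y) → X → ℝ)
    (hT : ∀ i x y, IsDist (T i x y))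
    (V Vb : Fin n → X → Y → ℝ)
    (hVpos : ∀ i x y, 0 < V i x y) (hVbpos : ∀ i x y, 0 < Vb i x y) :
    ∀ (m : ℕ) (h : m ≤ n), 0 < phiM t T V Vb m h ∧
      phiM t T V Vb m h = ∏ j : Fin m,
        phiTCond t (V (Fin.castLE h j)) (Vb (Fin.castLE h j))
          (tiltedInput t T V Vb (Fin.castLE h j)) := by
  intro m
  induction m with
  | zero =>
      intro h
      have h1 : phiM t T V Vb 0 h = 1 := by
        simp [phiM, QpreM, Real.one_rpow]
      rw [h1]
      exact ⟨one_pos, by simp⟩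
  | succ m ih =>
      intro h
      have h' : m ≤ n := Nat.le_of_succ_le h
      obtain ⟨hpos, hprod⟩ := ih h'
      have hφpre : phiPre t T V Vb ⟨m, h⟩ = phiM t T V Vb m h' := rfl
      have hcond := phiTCond_pos ht T hT V Vb hVpos hVbpos ⟨m, h⟩
        (by rw [hφpre]; exact hpos)
      have hstep := phiM_succ ht T hT V Vb hVpos hVbpos m h hpos.ne'
      refine ⟨by rw [hstep]; exact mul_pos hpos hcond, ?_⟩
      rw [hstep, hprod, Fin.prod_univ_castSucc]
      rfl
end ChainRulePos


/-- Multiplicative chain rule for `φ_t` under a common transmitter strategy: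
`φ_t(Q^n‖Q̄^n) = Π_i φ_t(Q_{Y_i|X_i}‖Q̄_{Y_i|X_i} | Q̃_{X_i})`, and equivalently
`log φ_t(Q^n‖Q̄^n) = Σ_i ψ_t(Q_{Y_i|X_i}‖Q̄_{Y_i|X_i} | Q̃_{X_i})`. -/
theorem phiT_chain_rule
    {X Y : Type} [Fintype X] [Fintype Y] [Nonempty X] [Nonempty Y] {n : ℕ}
    (t : ℝ) (ht : t < 0)
    (T : (i : Fin n) → (Fin i.val → X) → (Fin i.val → Y) → X → ℝ)
    (hT : ∀ i x y, IsDist (T i x y))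
    (V Vb : Fin n → X → Y → ℝ)
    (hV : ∀ i x, IsDist (V i x)) (hVb : ∀ i x, IsDist (Vb i x))
    (hVpos : ∀ i x y, 0 < V i x y) (hVbpos : ∀ i x y, 0 < Vb i x y) :
    phiT t (Qfull T V) (Qfull T Vb) =
      (∏ i : Fin n, phiTCond t (V i) (Vb i) (tiltedInput t T V Vb i)) ∧
    Real.log (phiT t (Qfull T V) (Qfull T Vb)) =
      ∑ i : Fin n, Real.log (phiTCond t (V i) (Vb i) (tiltedInput t T V Vb i)) := by
  have hmaster := phiM_master ht T hT V Vb hVpos hVbpos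
  obtain ⟨hpos, hprod⟩ := hmaster n le_rfl
  have hfull : phiT t (Qfull T V) (Qfull T Vb) = phiM t T V Vb n le_rfl := by
    rw [phiT, Fintype.sum_prod_type]; rfl
  have hci : ∀ i : Fin n,
      0 < phiTCond t (V i) (Vb i) (tiltedInput t T V Vb i) := by
    intro i
    exact phiTCond_pos ht T hT V Vb hVpos hVbpos i
      (show (0:ℝ) < phiM t T V Vb i.val i.isLt.le from (hmaster i.val i.isLt.le).1)
  have heq : phiT t (Qfull T V) (Qfull T Vb) =
      ∏ i : Fin n, phiTCond t (V i) (Vb i) (tiltedInput t T V Vb i) := by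
    rw [hfull, hprod]; rfl
  refine ⟨heq, ?_⟩
  rw [heq, Real.log_prod (fun i _ => (hci i).ne')]
end
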